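/- arXiv:2510.25291 — 8 statements merged into one kernel-verified Lean document; each statement's English description precedes it below -/
import Mathlib

section
/- Consider the SIS co-colonization system (★) with P patches and N strains, where the connectivity matrix 𝒟 is Metzler with zero row sums. Then the set Ω of states with every coordinate in [0,1] and, in each patch p, total S_p + Σ_i I_p^i + Σ_{i,j} D_p^{ij} = 1, is positively invariant: every solution of (★) with initial data in Ω remains in Ω for all t ≥ 0. -/
open Set Filter Topology

lemma quasipos_nonneg {α : Type*} [Fintype α] (x f : α → ℝ → ℝ) (b C : ℝ) (hC : 0 ≤ C)
    (hderiv : ∀ a, ∀ t ∈ Set.Icc (0:ℝ) b, HasDerivAt (x a) (f a t) t)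
    (hq : ∀ t ∈ Set.Icc (0:ℝ) b, ∀ a, x a t ≤ 0 →
      -C * ∑ c, max 0 (-(x c t)) ≤ f a t)
    (h0 : ∀ a, 0 ≤ x a 0) :
    ∀ t ∈ Set.Icc (0:ℝ) b, ∀ a, 0 ≤ x a t := by
  classical
  set n : ℝ := (Fintype.card α : ℝ) with hn
  have hn0 : 0 ≤ n := Nat.cast_nonneg _
  set K : ℝ := C * n + 1 with hK
  have hK0 : 0 < K := by positivity
  have key : ∀ ε : ℝ, 0 < ε → ∀ t ∈ Set.Icc (0:ℝ) b, ∀ a,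
      -(ε * Real.exp (K * t)) < x a t := by
    intro ε hε
    by_contra hcon
    push_neg at hcon
    obtain ⟨t₁, ht₁, a₁, ha₁⟩ := hcon
    set A : Set ℝ := ⋃ a : α, (Set.Icc 0 b ∩ {s | x a s + ε * Real.exp (K * s) ≤ 0}) with hA
    have hcont : ∀ a : α, ContinuousOn (fun s => x a s + ε * Real.exp (K * s)) (Set.Icc 0 b) := by
      intro a
      exact fun s hs => ((hderiv a s hs).continuousAt.continuousWithinAt).add
        (((Real.continuous_exp.comp (continuous_const.mul continuous_id)).continuousAt).continuousWithinAt.const_smul ε)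
    have hclosed : IsClosed A := by
      refine isClosed_iUnion_of_finite fun a => ?_
      exact (hcont a).preimage_isClosed_of_isClosed isClosed_Icc isClosed_Iic
    have hne : A.Nonempty := by
      refine ⟨t₁, Set.mem_iUnion.2 ⟨a₁, ht₁, ?_⟩⟩
      simp only [Set.mem_setOf_eq]
      linarith
    have hbdd : BddBelow A := by
      refine ⟨0, fun s hs => ?_⟩
      obtain ⟨a, ⟨hs1, _⟩⟩ := Set.mem_iUnion.1 hs
      exact hs1.1
    set τ := sInf A with hτ
    have hτA : τ ∈ A := hclosed.csInf_mem hne hbdd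
    obtain ⟨a₀, hτIcc, ha₀⟩ := Set.mem_iUnion.1 hτA
    simp only [Set.mem_setOf_eq] at ha₀
    have hτpos : 0 < τ := by
      rcases lt_or_eq_of_le hτIcc.1 with h | h
      · exact h
      · exfalso
        rw [← h] at ha₀
        simp only [mul_zero, Real.exp_zero, mul_one] at ha₀
        have := h0 a₀
        linarith
    have hbefore : ∀ s, 0 ≤ s → s < τ → ∀ c, 0 < x c s + ε * Real.exp (K * s) := by
      intro s hs0 hsτ c
      by_contra hle
      push_neg at hle
      have hsA : s ∈ A := Set.mem_iUnion.2 ⟨c, ⟨hs0, le_trans hsτ.le hτIcc.2⟩, hle⟩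
      exact absurd (csInf_le hbdd hsA) (not_le.2 hsτ)
    have hatτ : ∀ c, 0 ≤ x c τ + ε * Real.exp (K * τ) := by
      intro c
      have hct : ContinuousAt (fun s => x c s + ε * Real.exp (K * s)) τ :=
        ((hderiv c τ hτIcc).continuousAt).add
          ((Real.continuous_exp.comp (continuous_const.mul continuous_id)).continuousAt.const_smul ε)
      have htend : Tendsto (fun s => x c s + ε * Real.exp (K * s)) (𝓝[<] τ)
          (𝓝 (x c τ + ε * Real.exp (K * τ))) := hct.continuousWithinAt.tendsto
      refine ge_of_tendsto htend ?_
      filter_upwards [Ioo_mem_nhdsLT_of_mem (Set.mem_Ioc.2 ⟨hτpos, le_refl τ⟩)] with s hs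
      exact (hbefore s hs.1.le hs.2 c).le
    have hgτ : x a₀ τ + ε * Real.exp (K * τ) = 0 := le_antisymm ha₀ (hatτ a₀)
    have hxa₀ : x a₀ τ ≤ 0 := by
      have := Real.exp_pos (K * τ)
      nlinarith
    have hψ : 0 < ε * Real.exp (K * τ) := by positivity
    have hSum : ∑ c, max 0 (-(x c τ)) ≤ n * (ε * Real.exp (K * τ)) := by
      have hle : ∀ c ∈ Finset.univ, max 0 (-(x c τ)) ≤ ε * Real.exp (K * τ) := by
        intro c _
        exact max_le hψ.le (by linarith [hatτ c])
      calc ∑ c, max 0 (-(x c τ)) ≤ Finset.univ.card • (ε * Real.exp (K * τ)) :=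
            Finset.sum_le_card_nsmul _ _ _ hle
        _ = n * (ε * Real.exp (K * τ)) := by
            rw [nsmul_eq_mul, hn, Finset.card_univ]
    have hfa := hq τ hτIcc a₀ hxa₀
    have hg : HasDerivAt (fun s => x a₀ s + ε * Real.exp (K * s))
        (f a₀ τ + ε * (Real.exp (K * τ) * K)) τ := by
      refine (hderiv a₀ τ hτIcc).add ?_
      have h1 : HasDerivAt (fun s : ℝ => K * s) K τ := by
        simpa using (hasDerivAt_id τ).const_mul K
      exact ((Real.hasDerivAt_exp (K * τ)).comp τ h1).const_mul ε
    have hg'pos : 0 < f a₀ τ + ε * (Real.exp (K * τ) * K) := by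
      have h1 : C * (∑ c, max 0 (-(x c τ))) ≤ C * (n * (ε * Real.exp (K * τ))) :=
        mul_le_mul_of_nonneg_left hSum hC
      have h2 : ε * (Real.exp (K * τ) * K) = C * n * (ε * Real.exp (K * τ)) + ε * Real.exp (K * τ) := by
        rw [hK]; ring
      nlinarith
    have hslope : Tendsto (slope (fun s => x a₀ s + ε * Real.exp (K * s)) τ) (𝓝[<] τ)
        (𝓝 (f a₀ τ + ε * (Real.exp (K * τ) * K))) :=
      (hasDerivAt_iff_tendsto_slope.1 hg).mono_left
        (nhdsWithin_mono τ (fun s hs => ne_of_lt hs))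
    have hev1 : ∀ᶠ s in 𝓝[<] τ, 0 < slope (fun s => x a₀ s + ε * Real.exp (K * s)) τ s :=
      hslope.eventually (eventually_gt_nhds hg'pos)
    have hev2 : Ioo 0 τ ∈ 𝓝[<] τ := Ioo_mem_nhdsLT_of_mem (Set.mem_Ioc.2 ⟨hτpos, le_refl τ⟩)
    obtain ⟨s, hs1, hs2⟩ := (hev1.and (eventually_of_mem hev2 (fun s hs => hs))).exists
    rw [slope_def_field] at hs1
    have hgs : 0 < x a₀ s + ε * Real.exp (K * s) := hbefore s hs2.1.le hs2.2 a₀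
    have hd : (x a₀ s + ε * Real.exp (K * s)) - (x a₀ τ + ε * Real.exp (K * τ)) < 0 := by
      have hst : s - τ < 0 := by linarith [hs2.2]
      rcases div_pos_iff.1 hs1 with ⟨_, hden⟩ | ⟨hnum, _⟩
      · linarith
      · linarith
    linarith [hgτ, hgs, hd]
  intro t ht a
  by_contra hlt
  push_neg at hlt
  have hE : 0 < Real.exp (K * b) := Real.exp_pos _
  have hε0 : 0 < (-(x a t)) / (2 * Real.exp (K * b)) :=
    div_pos (by linarith) (by positivity)
  have h1 := key _ hε0 t ht a
  have hmono : Real.exp (K * t) ≤ Real.exp (K * b) :=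
    Real.exp_le_exp.2 (by nlinarith [ht.1, ht.2])
  have h2 : (-(x a t)) / (2 * Real.exp (K * b)) * Real.exp (K * t)
      ≤ (-(x a t)) / (2 * Real.exp (K * b)) * Real.exp (K * b) :=
    mul_le_mul_of_nonneg_left hmono hε0.le
  have h3 : (-(x a t)) / (2 * Real.exp (K * b)) * Real.exp (K * b) = -(x a t) / 2 := by
    field_simp
  nlinarith

lemma prod_lb {y z V CJ B BJ : ℝ} (hV : 0 ≤ V) (hCJ : 0 ≤ CJ) (hB : 0 ≤ B) (hBJ : 0 ≤ BJ)
    (hy1 : -(CJ * V) ≤ y) (hy2 : |y| ≤ BJ) (hz : |z| ≤ B) (hzv : max 0 (-z) ≤ V) :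
    -((CJ * B + BJ) * V) ≤ y * z := by
  rcases le_or_gt 0 z with hz0 | hz0
  · have h1 : z ≤ B := (abs_le.1 hz).2
    nlinarith [mul_nonneg (by linarith : (0:ℝ) ≤ y + CJ * V) hz0,
      mul_nonneg (mul_nonneg hCJ hV) (by linarith : (0:ℝ) ≤ B - z),
      mul_nonneg hBJ hV]
  · have h1 : -z ≤ V := le_trans (le_max_right _ _) hzv
    have h2 : y ≤ BJ := (abs_le.1 hy2).2
    nlinarith [mul_nonneg (by linarith : (0:ℝ) ≤ BJ - y) (by linarith : (0:ℝ) ≤ -z),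
      mul_nonneg hBJ (by linarith : (0:ℝ) ≤ V + z),
      mul_nonneg (mul_nonneg hCJ hB) hV]

lemma prod_ub {y z V B BJ : ℝ} (hV : 0 ≤ V) (hBJ : 0 ≤ BJ)
    (hy : |y| ≤ BJ) (hz0 : z ≤ 0) (hzv : max 0 (-z) ≤ V) (hB : 0 ≤ B) :
    y * z ≤ BJ * V := by
  have h1 : -z ≤ V := le_trans (le_max_right _ _) hzv
  have h2 : -BJ ≤ y := (abs_le.1 hy).1
  nlinarith [mul_nonneg (by linarith : (0:ℝ) ≤ y + BJ) (by linarith : (0:ℝ) ≤ -z),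
    mul_nonneg hBJ (by linarith : (0:ℝ) ≤ V + z)]

lemma mig_lb {P : ℕ} (Dm : Matrix (Fin P) (Fin P) ℝ)
    (hMetzler : ∀ p l, p ≠ l → 0 ≤ Dm p l) (hdiag : ∀ p', Dm p' p' ≤ 0)
    (p : Fin P) (X : Fin P → ℝ) (V CDm : ℝ) (hV : 0 ≤ V)
    (hCDm : ∑ l, |Dm p l| ≤ CDm)
    (hXp : X p ≤ 0) (hX : ∀ l, -V ≤ X l) :
    -(CDm * V) ≤ ∑ l, Dm p l * X l := by
  have h1 : ∀ l ∈ Finset.univ, -(|Dm p l| * V) ≤ Dm p l * X l := by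
    intro l _
    by_cases h : l = p
    · subst h
      nlinarith [mul_nonneg (neg_nonneg.2 (hdiag l)) (neg_nonneg.2 hXp),
        mul_nonneg (abs_nonneg (Dm l l)) hV]
    · have hd : 0 ≤ Dm p l := hMetzler p l (fun hh => h hh.symm)
      have h3 := mul_le_mul_of_nonneg_left (hX l) hd
      rw [abs_of_nonneg hd]
      nlinarith
  have h2 := Finset.sum_le_sum h1
  have h3 : ∑ l : Fin P, -(|Dm p l| * V) = -((∑ l, |Dm p l|) * V) := by
    rw [Finset.sum_neg_distrib, Finset.sum_mul]
  rw [h3] at h2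
  nlinarith [mul_le_mul_of_nonneg_right hCDm hV]

lemma sum_mul_ge {ι : Type*} [Fintype ι] (c y : ι → ℝ) (V Ct : ℝ)
    (hc : ∀ i, 0 ≤ c i) (hy : ∀ i, -V ≤ y i) (hV : 0 ≤ V) (hsum : ∑ i, c i ≤ Ct) :
    -(Ct * V) ≤ ∑ i, c i * y i := by
  have h1 : ∑ i, c i * (-V) ≤ ∑ i, c i * y i :=
    Finset.sum_le_sum fun i _ => mul_le_mul_of_nonneg_left (hy i) (hc i)
  have h2 : ∑ i, c i * (-V) = (∑ i, c i) * (-V) := by rw [Finset.sum_mul]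
  nlinarith [mul_le_mul_of_nonneg_right hsum hV]

lemma sum_mul_le {ι : Type*} [Fintype ι] (c y : ι → ℝ) (M Ct : ℝ)
    (hc : ∀ i, 0 ≤ c i) (hy : ∀ i, y i ≤ M) (hM : 0 ≤ M) (hsum : ∑ i, c i ≤ Ct) :
    ∑ i, c i * y i ≤ Ct * M := by
  have h1 : ∑ i, c i * y i ≤ ∑ i, c i * M :=
    Finset.sum_le_sum fun i _ => mul_le_mul_of_nonneg_left (hy i) (hc i)
  have h2 : ∑ i, c i * M = (∑ i, c i) * M := by rw [Finset.sum_mul]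
  nlinarith [mul_le_mul_of_nonneg_right hsum hM]

lemma swap_mig {ι : Type*} [Fintype ι] {P : ℕ} (Dm : Matrix (Fin P) (Fin P) ℝ) (p : Fin P)
    (g : Fin P → ι → ℝ) (δ : ℝ) :
    ∑ i, (δ * ∑ l, Dm p l * g l i) = δ * ∑ l, Dm p l * ∑ i, g l i := by
  rw [← Finset.mul_sum, Finset.sum_comm]
  congr 1
  exact Finset.sum_congr rfl fun l _ => (Finset.mul_sum _ _ _).symm
open scoped BigOperators

set_option maxHeartbeats 4000000 in
/-- Positivity invariance of the set `Ω` (all coordinates in `[0,1]`,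
per-patch total equal to `1`) for the SIS co-colonization system (★) with `P` patches
and `N` strains, when the connectivity matrix is Metzler with zero row sums. -/
theorem sis_omega_positively_invariant
    (P N : ℕ) (hP : 1 ≤ P) (hN : 1 ≤ N)
    (r : Fin P → ℝ) (hr : ∀ p, 0 < r p)
    (γ : Fin P → Fin N → ℝ) (hγ : ∀ p i, 0 ≤ γ p i)
    (γ2 : Fin P → Fin N → Fin N → ℝ) (hγ2 : ∀ p i j, 0 ≤ γ2 p i j)
    (β : Fin P → Fin N → ℝ) (hβ : ∀ p i, 0 ≤ β p i)
    (k : Fin P → Fin N → Fin N → ℝ) (hk : ∀ p i j, 0 ≤ k p i j)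
    (q : Fin P → Fin N → Fin N → ℝ) (hq : ∀ p i j, q p i j ∈ Set.Icc (0:ℝ) 1)
    (δ : ℝ) (hδ : 0 ≤ δ)
    (Dm : Matrix (Fin P) (Fin P) ℝ)
    (hMetzler : ∀ p l, p ≠ l → 0 ≤ Dm p l)
    (hrow : ∀ p, ∑ l, Dm p l = 0)
    (S : ℝ → Fin P → ℝ)
    (I : ℝ → Fin P → Fin N → ℝ)
    (Dc : ℝ → Fin P → Fin N → Fin N → ℝ)
    (J : ℝ → Fin P → Fin N → ℝ)
    (hJ : ∀ t p i, J t p i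
      = I t p i + ∑ j, (q p i j * Dc t p i j + (1 - q p j i) * Dc t p j i))
    (hS : ∀ t, 0 ≤ t → ∀ p, HasDerivAt (fun s => S s p)
      (r p * (1 - S t p) + (∑ i, γ p i * I t p i)
        + (∑ i, ∑ j, γ2 p i j * Dc t p i j)
        - (∑ i, β p i * J t p i * S t p)
        + δ * ∑ l, Dm p l * S t l) t)
    (hI : ∀ t, 0 ≤ t → ∀ p i, HasDerivAt (fun s => I s p i)
      (β p i * J t p i * S t p - (r p + γ p i) * I t p i
        - (∑ j, k p i j * β p i * I t p i * J t p j)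
        + δ * ∑ l, Dm p l * I t l i) t)
    (hD : ∀ t, 0 ≤ t → ∀ p i j, HasDerivAt (fun s => Dc s p i j)
      (k p i j * β p i * I t p i * J t p j
        - (r p + γ2 p i j) * Dc t p i j
        + δ * ∑ l, Dm p l * Dc t l i j) t)
    (hinit : (∀ p, S 0 p ∈ Set.Icc (0:ℝ) 1)
      ∧ (∀ p i, I 0 p i ∈ Set.Icc (0:ℝ) 1)
      ∧ (∀ p i j, Dc 0 p i j ∈ Set.Icc (0:ℝ) 1)
      ∧ (∀ p, S 0 p + (∑ i, I 0 p i) + (∑ i, ∑ j, Dc 0 p i j) = 1)) :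
    ∀ t, 0 ≤ t →
      (∀ p, S t p ∈ Set.Icc (0:ℝ) 1)
      ∧ (∀ p i, I t p i ∈ Set.Icc (0:ℝ) 1)
      ∧ (∀ p i j, Dc t p i j ∈ Set.Icc (0:ℝ) 1)
      ∧ (∀ p, S t p + (∑ i, I t p i) + (∑ i, ∑ j, Dc t p i j) = 1) := by
  classical
  obtain ⟨hS0, hI0, hD0, hT0⟩ := hinit
  have hdiagDm : ∀ p', Dm p' p' ≤ 0 := by
    intro p'
    have h := hrow p'
    rw [← Finset.add_sum_erase _ _ (Finset.mem_univ p')] at h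
    have h2 : 0 ≤ ∑ l ∈ Finset.univ.erase p', Dm p' l :=
      Finset.sum_nonneg fun l hl => hMetzler p' l (Finset.ne_of_mem_erase hl).symm
    linarith
  -- Step 1: conservation of the per-patch total
  have conservation : ∀ b, 0 ≤ b → ∀ p,
      S b p + (∑ i, I b p i) + (∑ i, ∑ j, Dc b p i j) = 1 := by
    intro b hb
    set U : ℝ → Fin P → ℝ :=
      fun s p => S s p + (∑ i, I s p i) + (∑ i, ∑ j, Dc s p i j) - 1 with hUdef
    set U' : ℝ → Fin P → ℝ :=
      fun s p => -(r p) * U s p + δ * ∑ l, Dm p l * U s l with hU'def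
    have hdU : ∀ s, 0 ≤ s → HasDerivAt U (U' s) s := by
      intro s hs
      rw [hasDerivAt_pi]
      intro p
      have h1 : HasDerivAt (fun u => S u p + (∑ i, I u p i) + (∑ i, ∑ j, Dc u p i j) - 1)
          ((r p * (1 - S s p) + (∑ i, γ p i * I s p i) + (∑ i, ∑ j, γ2 p i j * Dc s p i j)
            - (∑ i, β p i * J s p i * S s p) + δ * ∑ l, Dm p l * S s l)
           + (∑ i, (β p i * J s p i * S s p - (r p + γ p i) * I s p i
              - (∑ j, k p i j * β p i * I s p i * J s p j) + δ * ∑ l, Dm p l * I s l i))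
           + (∑ i, ∑ j, (k p i j * β p i * I s p i * J s p j - (r p + γ2 p i j) * Dc s p i j
              + δ * ∑ l, Dm p l * Dc s l i j))) s :=
        (((hS s hs p).add (HasDerivAt.fun_sum fun i _ => hI s hs p i)).add
          (HasDerivAt.fun_sum fun i _ => HasDerivAt.fun_sum fun j _ => hD s hs p i j)).sub_const 1
      have expandI : ∑ i, (β p i * J s p i * S s p - (r p + γ p i) * I s p i
            - (∑ j, k p i j * β p i * I s p i * J s p j) + δ * ∑ l, Dm p l * I s l i)
          = (∑ i, β p i * J s p i * S s p) - ((r p) * ∑ i, I s p i) - (∑ i, γ p i * I s p i)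
            - (∑ i, ∑ j, k p i j * β p i * I s p i * J s p j)
            + δ * ∑ l, Dm p l * ∑ i, I s l i := by
        rw [← swap_mig Dm p (fun l i => I s l i) δ]
        simp only [add_mul, Finset.sum_add_distrib, Finset.sum_sub_distrib, ← Finset.mul_sum]
        ring
      have expandD : ∑ i, ∑ j, (k p i j * β p i * I s p i * J s p j
            - (r p + γ2 p i j) * Dc s p i j + δ * ∑ l, Dm p l * Dc s l i j)
          = (∑ i, ∑ j, k p i j * β p i * I s p i * J s p j) - ((r p) * ∑ i, ∑ j, Dc s p i j)
            - (∑ i, ∑ j, γ2 p i j * Dc s p i j)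
            + δ * ∑ l, Dm p l * ∑ i, ∑ j, Dc s l i j := by
        have e1 : ∀ i : Fin N, ∑ j, (k p i j * β p i * I s p i * J s p j
              - (r p + γ2 p i j) * Dc s p i j + δ * ∑ l, Dm p l * Dc s l i j)
            = (∑ j, k p i j * β p i * I s p i * J s p j) - ((r p) * ∑ j, Dc s p i j)
              - (∑ j, γ2 p i j * Dc s p i j) + δ * ∑ l, Dm p l * ∑ j, Dc s l i j := by
          intro i
          rw [← swap_mig Dm p (fun l j => Dc s l i j) δ]
          simp only [add_mul, Finset.sum_add_distrib, Finset.sum_sub_distrib, ← Finset.mul_sum]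
          ring
        rw [Finset.sum_congr rfl fun i _ => e1 i]
        rw [← swap_mig Dm p (fun l i => ∑ j, Dc s l i j) δ]
        simp only [Finset.sum_add_distrib, Finset.sum_sub_distrib, ← Finset.mul_sum]
        try ring
      have hrw : ∑ l, Dm p l * U s l
          = (∑ l, Dm p l * S s l) + (∑ l, Dm p l * ∑ i, I s l i)
            + (∑ l, Dm p l * ∑ i, ∑ j, Dc s l i j) := by
        simp only [hUdef]
        simp only [mul_sub, mul_add, Finset.sum_sub_distrib, Finset.sum_add_distrib, mul_one]
        rw [hrow p]
        ring
      have heq : (r p * (1 - S s p) + (∑ i, γ p i * I s p i)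
            + (∑ i, ∑ j, γ2 p i j * Dc s p i j)
            - (∑ i, β p i * J s p i * S s p) + δ * ∑ l, Dm p l * S s l)
           + (∑ i, (β p i * J s p i * S s p - (r p + γ p i) * I s p i
              - (∑ j, k p i j * β p i * I s p i * J s p j) + δ * ∑ l, Dm p l * I s l i))
           + (∑ i, ∑ j, (k p i j * β p i * I s p i * J s p j - (r p + γ2 p i j) * Dc s p i j
              + δ * ∑ l, Dm p l * Dc s l i j))
          = U' s p := by
        rw [expandI, expandD]
        simp only [hU'def]
        rw [hrw]
        simp only [hUdef]
        ring
      rw [heq] at h1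
      exact h1
    set K : ℝ := (∑ p', r p') + δ * ∑ p', ∑ l, |Dm p' l| with hKdef
    have hrsum : ∀ p', r p' ≤ ∑ p'', r p'' :=
      fun p' => Finset.single_le_sum (fun i _ => (hr i).le) (Finset.mem_univ p')
    have habs : ∀ p', ∑ l, |Dm p' l| ≤ ∑ p'', ∑ l, |Dm p'' l| :=
      fun p' => Finset.single_le_sum (f := fun p'' => ∑ l, |Dm p'' l|)
        (fun i _ => Finset.sum_nonneg fun l _ => abs_nonneg _) (Finset.mem_univ p')
    have hK0 : 0 ≤ K :=
      add_nonneg (Finset.sum_nonneg fun i _ => (hr i).le)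
        (mul_nonneg hδ (Finset.sum_nonneg fun i _ => Finset.sum_nonneg fun l _ => abs_nonneg _))
    have hcontU : ContinuousOn U (Set.Icc 0 b) :=
      fun s hs => ((hdU s hs.1).continuousAt).continuousWithinAt
    have hUzero : U 0 = 0 := by
      funext p
      simp only [hUdef]
      have := hT0 p
      simp only [Pi.zero_apply]
      linarith
    have hU0 : ‖U 0‖ ≤ 0 := le_of_eq (by rw [hUzero, norm_zero])
    have hbound : ∀ s ∈ Set.Ico (0:ℝ) b, ‖U' s‖ ≤ K * ‖U s‖ + 0 := by
      intro s hs
      rw [add_zero]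
      refine (pi_norm_le_iff_of_nonneg (mul_nonneg hK0 (norm_nonneg _))).2 fun p => ?_
      rw [Real.norm_eq_abs]
      have hUb : ∀ l, |U s l| ≤ ‖U s‖ := fun l => norm_le_pi_norm (U s) l
      have h1 : |(-(r p)) * U s p| ≤ r p * ‖U s‖ := by
        rw [abs_mul, abs_neg, abs_of_pos (hr p)]
        exact mul_le_mul_of_nonneg_left (hUb p) (hr p).le
      have h2 : |δ * ∑ l, Dm p l * U s l| ≤ δ * ((∑ l, |Dm p l|) * ‖U s‖) := by
        rw [abs_mul, abs_of_nonneg hδ]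
        refine mul_le_mul_of_nonneg_left ?_ hδ
        refine (Finset.abs_sum_le_sum_abs _ _).trans ?_
        rw [Finset.sum_mul]
        refine Finset.sum_le_sum fun l _ => ?_
        rw [abs_mul]
        exact mul_le_mul_of_nonneg_left (hUb l) (abs_nonneg _)
      have h3 : |U' s p| ≤ |(-(r p)) * U s p| + |δ * ∑ l, Dm p l * U s l| := by
        simp only [hU'def]
        exact abs_add_le _ _
      have h4 := mul_le_mul_of_nonneg_right (hrsum p) (norm_nonneg (U s))
      have h5 := mul_le_mul_of_nonneg_left
        (mul_le_mul_of_nonneg_right (habs p) (norm_nonneg (U s))) hδ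
      rw [hKdef]
      nlinarith [h1, h2, h3]
    have hg := norm_le_gronwallBound_of_norm_deriv_right_le hcontU
      (fun s hs => (hdU s hs.1).hasDerivWithinAt) hU0 hbound
    have hgb := hg b ⟨hb, le_refl b⟩
    rw [gronwallBound_ε0_δ0] at hgb
    have hUb0 : U b = 0 := norm_le_zero_iff.1 hgb
    intro p
    have := congrFun hUb0 p
    simp only [hUdef, Pi.zero_apply] at this
    linarith
  -- Step 2: nonnegativity of all coordinates
  have nonneg : ∀ b, 0 ≤ b →
      (∀ p, 0 ≤ S b p) ∧ (∀ p i, 0 ≤ I b p i) ∧ (∀ p i j, 0 ≤ Dc b p i j) := by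
    intro b hb
    set xx : (Fin P ⊕ (Fin P × Fin N) ⊕ (Fin P × Fin N × Fin N)) → ℝ → ℝ :=
      fun a s => Sum.elim (fun p => S s p)
        (Sum.elim (fun pi => I s pi.1 pi.2) (fun x => Dc s x.1 x.2.1 x.2.2)) a with hxxdef
    set ff : (Fin P ⊕ (Fin P × Fin N) ⊕ (Fin P × Fin N × Fin N)) → ℝ → ℝ :=
      fun a s => Sum.elim
        (fun p => r p * (1 - S s p) + (∑ i, γ p i * I s p i)
          + (∑ i, ∑ j, γ2 p i j * Dc s p i j)
          - (∑ i, β p i * J s p i * S s p) + δ * ∑ l, Dm p l * S s l)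
        (Sum.elim
          (fun pi => β pi.1 pi.2 * J s pi.1 pi.2 * S s pi.1
            - (r pi.1 + γ pi.1 pi.2) * I s pi.1 pi.2
            - (∑ j, k pi.1 pi.2 j * β pi.1 pi.2 * I s pi.1 pi.2 * J s pi.1 j)
            + δ * ∑ l, Dm pi.1 l * I s l pi.2)
          (fun x => k x.1 x.2.1 x.2.2 * β x.1 x.2.1 * I s x.1 x.2.1 * J s x.1 x.2.2
            - (r x.1 + γ2 x.1 x.2.1 x.2.2) * Dc s x.1 x.2.1 x.2.2
            + δ * ∑ l, Dm x.1 l * Dc s l x.2.1 x.2.2)) a with hffdef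
    have hderiv : ∀ a, ∀ s ∈ Set.Icc (0:ℝ) b, HasDerivAt (xx a) (ff a s) s := by
      rintro (p | ⟨p, i⟩ | ⟨p, i, j⟩) s hs
      · exact hS s hs.1 p
      · exact hI s hs.1 p i
      · exact hD s hs.1 p i j
    have hcontX : ContinuousOn (fun s (a : (Fin P ⊕ (Fin P × Fin N) ⊕ (Fin P × Fin N × Fin N))) => xx a s)
        (Set.Icc 0 b) :=
      continuousOn_pi.2 fun a s hs => ((hderiv a s hs).continuousAt).continuousWithinAt
    obtain ⟨B0, hB0⟩ := (isCompact_Icc).exists_bound_of_continuousOn hcontX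
    set B := max B0 0 with hBdef
    have hB0' : (0:ℝ) ≤ B := le_max_right _ _
    have hBnd : ∀ s ∈ Set.Icc (0:ℝ) b, ∀ c, |xx c s| ≤ B := by
      intro s hs c
      have h1 : |xx c s| ≤ ‖(fun a => xx a s)‖ := norm_le_pi_norm (fun a => xx a s) c
      exact h1.trans ((hB0 s hs).trans (le_max_left _ _))
    set CΓ := ∑ p', ∑ i, γ p' i with hCΓdef
    set CΓ2 := ∑ p', ∑ i, ∑ j, γ2 p' i j with hCΓ2def
    set Cβ := ∑ p', ∑ i, β p' i with hCβdef
    set Ck := ∑ p', ∑ i, ∑ j, k p' i j * β p' i with hCkdef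
    set CDm := ∑ p', ∑ l, |Dm p' l| with hCDmdef
    set CJ : ℝ := 1 + 2 * (N : ℝ) with hCJdef
    set BJ := B * CJ with hBJdef
    set C := CΓ + CΓ2 + Cβ * BJ + (Cβ + Ck) * (CJ * B + BJ) + Ck * BJ + δ * CDm with hCdef
    have hCΓ0 : 0 ≤ CΓ := Finset.sum_nonneg fun p' _ => Finset.sum_nonneg fun i _ => hγ p' i
    have hCΓ20 : 0 ≤ CΓ2 := Finset.sum_nonneg fun p' _ => Finset.sum_nonneg fun i _ =>
      Finset.sum_nonneg fun j _ => hγ2 p' i j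
    have hCβ0 : 0 ≤ Cβ := Finset.sum_nonneg fun p' _ => Finset.sum_nonneg fun i _ => hβ p' i
    have hCk0 : 0 ≤ Ck := Finset.sum_nonneg fun p' _ => Finset.sum_nonneg fun i _ =>
      Finset.sum_nonneg fun j _ => mul_nonneg (hk p' i j) (hβ p' i)
    have hCDm0 : 0 ≤ CDm := Finset.sum_nonneg fun p' _ => Finset.sum_nonneg fun l _ => abs_nonneg _
    have hCJ0 : (0:ℝ) ≤ CJ := by rw [hCJdef]; positivity
    have hBJ0 : 0 ≤ BJ := by rw [hBJdef]; exact mul_nonneg hB0' hCJ0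
    have hC0 : 0 ≤ C := by
      rw [hCdef]
      have s1 : 0 ≤ Cβ * BJ := mul_nonneg hCβ0 hBJ0
      have s2 : 0 ≤ (Cβ + Ck) * (CJ * B + BJ) :=
        mul_nonneg (add_nonneg hCβ0 hCk0) (add_nonneg (mul_nonneg hCJ0 hB0') hBJ0)
      have s3 : 0 ≤ Ck * BJ := mul_nonneg hCk0 hBJ0
      have s4 : 0 ≤ δ * CDm := mul_nonneg hδ hCDm0
      linarith
    have hγle : ∀ p', ∑ i, γ p' i ≤ CΓ := fun p' =>
      Finset.single_le_sum (f := fun p'' => ∑ i, γ p'' i)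
        (fun i _ => Finset.sum_nonneg fun i' _ => hγ i i') (Finset.mem_univ p')
    have hγ2le : ∀ p', ∑ x : Fin N × Fin N, γ2 p' x.1 x.2 ≤ CΓ2 := by
      intro p'
      rw [Fintype.sum_prod_type]
      exact Finset.single_le_sum (f := fun p'' => ∑ i, ∑ j, γ2 p'' i j)
        (fun i _ => Finset.sum_nonneg fun i' _ => Finset.sum_nonneg fun j' _ => hγ2 i i' j')
        (Finset.mem_univ p')
    have hβle : ∀ p', ∑ i, β p' i ≤ Cβ := fun p' =>
      Finset.single_le_sum (f := fun p'' => ∑ i, β p'' i)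
        (fun i _ => Finset.sum_nonneg fun i' _ => hβ i i') (Finset.mem_univ p')
    have hβle1 : ∀ p' i, β p' i ≤ Cβ := fun p' i =>
      le_trans (Finset.single_le_sum (fun i' _ => hβ p' i') (Finset.mem_univ i)) (hβle p')
    have hkle : ∀ p' i, ∑ j, k p' i j * β p' i ≤ Ck := fun p' i =>
      le_trans
        (Finset.single_le_sum (f := fun i' => ∑ j, k p' i' j * β p' i')
          (fun i' _ => Finset.sum_nonneg fun j' _ => mul_nonneg (hk p' i' j') (hβ p' i'))
          (Finset.mem_univ i))
        (Finset.single_le_sum (f := fun p'' => ∑ i', ∑ j, k p'' i' j * β p'' i')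
          (fun p'' _ => Finset.sum_nonneg fun i' _ => Finset.sum_nonneg fun j' _ =>
            mul_nonneg (hk p'' i' j') (hβ p'' i'))
          (Finset.mem_univ p'))
    have hkle1 : ∀ p' i j, k p' i j * β p' i ≤ Ck := fun p' i j =>
      le_trans (Finset.single_le_sum
        (fun j' _ => mul_nonneg (hk p' i j') (hβ p' i)) (Finset.mem_univ j)) (hkle p' i)
    have hDmle : ∀ p', ∑ l, |Dm p' l| ≤ CDm := fun p' =>
      Finset.single_le_sum (f := fun p'' => ∑ l, |Dm p'' l|)
        (fun i _ => Finset.sum_nonneg fun l _ => abs_nonneg _) (Finset.mem_univ p')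
    have h0main : ∀ a, 0 ≤ xx a 0 := by
      rintro (p | ⟨p, i⟩ | ⟨p, i, j⟩)
      · exact (hS0 p).1
      · exact (hI0 p i).1
      · exact (hD0 p i j).1
    have hqmain : ∀ s ∈ Set.Icc (0:ℝ) b, ∀ a, xx a s ≤ 0 →
        -C * ∑ c, max 0 (-(xx c s)) ≤ ff a s := by
      intro s hs
      set V := ∑ c, max 0 (-(xx c s)) with hVdef
      have hvle : ∀ c, max 0 (-(xx c s)) ≤ V := by
        intro c
        rw [hVdef]
        exact Finset.single_le_sum (f := fun c' => max 0 (-(xx c' s)))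
          (fun c' _ => le_max_left _ _) (Finset.mem_univ c)
      have hV0 : 0 ≤ V := by
        rw [hVdef]
        exact Finset.sum_nonneg fun c _ => le_max_left _ _
      have hge : ∀ c, -V ≤ xx c s := by
        intro c
        have h1 := hvle c
        have h2 : -(xx c s) ≤ max 0 (-(xx c s)) := le_max_right _ _
        linarith
      have hgeS : ∀ p, -V ≤ S s p := fun p => hge (Sum.inl p)
      have hgeI : ∀ p i, -V ≤ I s p i := fun p i => hge (Sum.inr (Sum.inl (p, i)))
      have hgeD : ∀ p i j, -V ≤ Dc s p i j := fun p i j => hge (Sum.inr (Sum.inr (p, i, j)))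
      have hvS : ∀ p, max 0 (-(S s p)) ≤ V := fun p => hvle (Sum.inl p)
      have hvI : ∀ p i, max 0 (-(I s p i)) ≤ V := fun p i => hvle (Sum.inr (Sum.inl (p, i)))
      have hvD : ∀ p i j, max 0 (-(Dc s p i j)) ≤ V := fun p i j => hvle (Sum.inr (Sum.inr (p, i, j)))
      have hBS : ∀ p, |S s p| ≤ B := fun p => hBnd s hs (Sum.inl p)
      have hBI : ∀ p i, |I s p i| ≤ B := fun p i => hBnd s hs (Sum.inr (Sum.inl (p, i)))
      have hBD : ∀ p i j, |Dc s p i j| ≤ B := fun p i j => hBnd s hs (Sum.inr (Sum.inr (p, i, j)))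
      have hJub : ∀ p' i, |J s p' i| ≤ BJ := by
        intro p' i
        rw [hJ]
        refine (abs_add_le _ _).trans ?_
        have h1 : |∑ j, (q p' i j * Dc s p' i j + (1 - q p' j i) * Dc s p' j i)|
            ≤ (N : ℝ) * (2 * B) := by
          refine (Finset.abs_sum_le_sum_abs _ _).trans ?_
          have h2 : ∀ j ∈ Finset.univ,
              |q p' i j * Dc s p' i j + (1 - q p' j i) * Dc s p' j i| ≤ 2 * B := by
            intro j _
            have e1 : |q p' i j * Dc s p' i j| ≤ B := by
              rw [abs_mul, abs_of_nonneg (hq p' i j).1]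
              nlinarith [hBD p' i j, (hq p' i j).2, (hq p' i j).1, abs_nonneg (Dc s p' i j)]
            have e2 : |(1 - q p' j i) * Dc s p' j i| ≤ B := by
              rw [abs_mul, abs_of_nonneg (by linarith [(hq p' j i).2] : (0:ℝ) ≤ 1 - q p' j i)]
              nlinarith [hBD p' j i, (hq p' j i).1, abs_nonneg (Dc s p' j i)]
            calc |q p' i j * Dc s p' i j + (1 - q p' j i) * Dc s p' j i|
                ≤ |q p' i j * Dc s p' i j| + |(1 - q p' j i) * Dc s p' j i| := abs_add_le _ _
              _ ≤ 2 * B := by linarith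
          calc ∑ j, |q p' i j * Dc s p' i j + (1 - q p' j i) * Dc s p' j i|
              ≤ ∑ _j : Fin N, (2 * B) := Finset.sum_le_sum h2
            _ = (N : ℝ) * (2 * B) := by
                rw [Finset.sum_const, Finset.card_univ, Fintype.card_fin, nsmul_eq_mul]
        have h3 := hBI p' i
        rw [hBJdef, hCJdef]
        nlinarith [h1, h3]
      have hJlb : ∀ p' i, -(CJ * V) ≤ J s p' i := by
        intro p' i
        rw [hJ]
        have h1 : ∀ j ∈ Finset.univ,
            -(2 * V) ≤ q p' i j * Dc s p' i j + (1 - q p' j i) * Dc s p' j i := by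
          intro j _
          have a1 := mul_le_mul_of_nonneg_left (hgeD p' i j) (hq p' i j).1
          have a2 := mul_le_mul_of_nonneg_left (hgeD p' j i)
            (by linarith [(hq p' j i).2] : (0:ℝ) ≤ 1 - q p' j i)
          nlinarith [mul_nonneg (by linarith [(hq p' i j).2] : (0:ℝ) ≤ 1 - q p' i j) hV0,
            mul_nonneg (hq p' j i).1 hV0]
        have h2 := Finset.sum_le_sum h1
        rw [Finset.sum_const, Finset.card_univ, Fintype.card_fin, nsmul_eq_mul] at h2
        have h3 := hgeI p' i
        rw [hCJdef]
        nlinarith [h2, h3]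
      rintro (p | ⟨p, i⟩ | ⟨p, i, j⟩) hxa
      · -- S equation
        have hxa' : S s p ≤ 0 := hxa
        show -C * V ≤ r p * (1 - S s p) + (∑ i, γ p i * I s p i)
          + (∑ i, ∑ j, γ2 p i j * Dc s p i j)
          - (∑ i, β p i * J s p i * S s p) + δ * ∑ l, Dm p l * S s l
        have t1 : 0 ≤ r p * (1 - S s p) := mul_nonneg (hr p).le (by linarith)
        have t2 : -(CΓ * V) ≤ ∑ i, γ p i * I s p i :=
          sum_mul_ge (γ p) (fun i => I s p i) V CΓ (hγ p) (hgeI p) hV0 (hγle p)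
        have t3 : -(CΓ2 * V) ≤ ∑ i, ∑ j, γ2 p i j * Dc s p i j := by
          have h := sum_mul_ge (fun x : Fin N × Fin N => γ2 p x.1 x.2)
            (fun x => Dc s p x.1 x.2) V CΓ2 (fun x => hγ2 p x.1 x.2)
            (fun x => hgeD p x.1 x.2) hV0 (hγ2le p)
          rwa [Fintype.sum_prod_type] at h
        have t4 : ∑ i, β p i * J s p i * S s p ≤ Cβ * (BJ * V) := by
          have e : ∑ i, β p i * J s p i * S s p = ∑ i, β p i * (J s p i * S s p) :=
            Finset.sum_congr rfl fun i _ => by ring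
          rw [e]
          exact sum_mul_le (β p) (fun i => J s p i * S s p) (BJ * V) Cβ (hβ p)
            (fun i => prod_ub hV0 hBJ0 (hJub p i) hxa' (hvS p) hB0')
            (mul_nonneg hBJ0 hV0) (hβle p)
        have t5 : -(CDm * V) ≤ ∑ l, Dm p l * S s l :=
          mig_lb Dm hMetzler hdiagDm p (fun l => S s l) V CDm hV0 (hDmle p) hxa' hgeS
        have t5' := mul_le_mul_of_nonneg_left t5 hδ
        have slack1 : 0 ≤ (Cβ + Ck) * ((CJ * B + BJ) * V) :=
          mul_nonneg (add_nonneg hCβ0 hCk0)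
            (mul_nonneg (add_nonneg (mul_nonneg hCJ0 hB0') hBJ0) hV0)
        have slack2 : 0 ≤ Ck * (BJ * V) := mul_nonneg hCk0 (mul_nonneg hBJ0 hV0)
        rw [hCdef]
        nlinarith [t1, t2, t3, t4, t5', slack1, slack2]
      · -- I equation
        have hxa' : I s p i ≤ 0 := hxa
        show -C * V ≤ β p i * J s p i * S s p - (r p + γ p i) * I s p i
          - (∑ j, k p i j * β p i * I s p i * J s p j) + δ * ∑ l, Dm p l * I s l i
        have u1 : -((CJ * B + BJ) * V) ≤ J s p i * S s p :=
          prod_lb hV0 hCJ0 hB0' hBJ0 (hJlb p i) (hJub p i) (hBS p) (hvS p)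
        have hnn : 0 ≤ (CJ * B + BJ) * V :=
          mul_nonneg (add_nonneg (mul_nonneg hCJ0 hB0') hBJ0) hV0
        have u1' : -(Cβ * ((CJ * B + BJ) * V)) ≤ β p i * (J s p i * S s p) := by
          have a1 := mul_le_mul_of_nonneg_left u1 (hβ p i)
          have a2 := mul_le_mul_of_nonneg_right (hβle1 p i) hnn
          nlinarith
        have u2 : (r p + γ p i) * I s p i ≤ 0 := by
          nlinarith [mul_le_mul_of_nonneg_left hxa' (add_nonneg (hr p).le (hγ p i))]
        have u3 : ∑ j, k p i j * β p i * I s p i * J s p j ≤ Ck * (BJ * V) := by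
          have e : ∑ j, k p i j * β p i * I s p i * J s p j
              = ∑ j, (k p i j * β p i) * (J s p j * I s p i) :=
            Finset.sum_congr rfl fun j _ => by ring
          rw [e]
          exact sum_mul_le (fun j => k p i j * β p i) (fun j => J s p j * I s p i)
            (BJ * V) Ck (fun j => mul_nonneg (hk p i j) (hβ p i))
            (fun j => prod_ub hV0 hBJ0 (hJub p j) hxa' (hvI p i) hB0')
            (mul_nonneg hBJ0 hV0) (hkle p i)
        have u4 : -(CDm * V) ≤ ∑ l, Dm p l * I s l i :=
          mig_lb Dm hMetzler hdiagDm p (fun l => I s l i) V CDm hV0 (hDmle p) hxa'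
            (fun l => hgeI l i)
        have u4' := mul_le_mul_of_nonneg_left u4 hδ
        have slack1 : 0 ≤ CΓ * V := mul_nonneg hCΓ0 hV0
        have slack2 : 0 ≤ CΓ2 * V := mul_nonneg hCΓ20 hV0
        have slack3 : 0 ≤ Cβ * (BJ * V) := mul_nonneg hCβ0 (mul_nonneg hBJ0 hV0)
        have slack4 : 0 ≤ Ck * ((CJ * B + BJ) * V) := mul_nonneg hCk0 hnn
        rw [hCdef]
        nlinarith [u1', u2, u3, u4', slack1, slack2, slack3, slack4]
      · -- D equation
        have hxa' : Dc s p i j ≤ 0 := hxa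
        show -C * V ≤ k p i j * β p i * I s p i * J s p j
          - (r p + γ2 p i j) * Dc s p i j + δ * ∑ l, Dm p l * Dc s l i j
        have w1 : -((CJ * B + BJ) * V) ≤ J s p j * I s p i :=
          prod_lb hV0 hCJ0 hB0' hBJ0 (hJlb p j) (hJub p j) (hBI p i) (hvI p i)
        have hnn : 0 ≤ (CJ * B + BJ) * V :=
          mul_nonneg (add_nonneg (mul_nonneg hCJ0 hB0') hBJ0) hV0
        have w1' : -(Ck * ((CJ * B + BJ) * V)) ≤ k p i j * β p i * I s p i * J s p j := by
          have a1 := mul_le_mul_of_nonneg_left w1 (mul_nonneg (hk p i j) (hβ p i))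
          have a2 := mul_le_mul_of_nonneg_right (hkle1 p i j) hnn
          nlinarith
        have w2 : (r p + γ2 p i j) * Dc s p i j ≤ 0 := by
          nlinarith [mul_le_mul_of_nonneg_left hxa' (add_nonneg (hr p).le (hγ2 p i j))]
        have w3 : -(CDm * V) ≤ ∑ l, Dm p l * Dc s l i j :=
          mig_lb Dm hMetzler hdiagDm p (fun l => Dc s l i j) V CDm hV0 (hDmle p) hxa'
            (fun l => hgeD l i j)
        have w3' := mul_le_mul_of_nonneg_left w3 hδ
        have slack1 : 0 ≤ CΓ * V := mul_nonneg hCΓ0 hV0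
        have slack2 : 0 ≤ CΓ2 * V := mul_nonneg hCΓ20 hV0
        have slack3 : 0 ≤ Cβ * (BJ * V) := mul_nonneg hCβ0 (mul_nonneg hBJ0 hV0)
        have slack4 : 0 ≤ Cβ * ((CJ * B + BJ) * V) := mul_nonneg hCβ0 hnn
        have slack5 : 0 ≤ Ck * (BJ * V) := mul_nonneg hCk0 (mul_nonneg hBJ0 hV0)
        rw [hCdef]
        nlinarith [w1', w2, w3', slack1, slack2, slack3, slack4, slack5]
    have hm := quasipos_nonneg xx ff b C hC0 hderiv hqmain h0main
    exact ⟨fun p => hm b ⟨hb, le_refl b⟩ (Sum.inl p),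
      fun p i => hm b ⟨hb, le_refl b⟩ (Sum.inr (Sum.inl (p, i))),
      fun p i j => hm b ⟨hb, le_refl b⟩ (Sum.inr (Sum.inr (p, i, j)))⟩
  -- Conclusion
  intro t ht
  obtain ⟨hSn, hIn, hDn⟩ := nonneg t ht
  have hcons := conservation t ht
  have hIsum : ∀ p, 0 ≤ ∑ i, I t p i := fun p => Finset.sum_nonneg fun i _ => hIn p i
  have hDsum : ∀ p, 0 ≤ ∑ i, ∑ j, Dc t p i j := fun p =>
    Finset.sum_nonneg fun i _ => Finset.sum_nonneg fun j _ => hDn p i j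
  refine ⟨fun p => Set.mem_Icc.2 ⟨hSn p, ?_⟩, fun p i => Set.mem_Icc.2 ⟨hIn p i, ?_⟩,
    fun p i j => Set.mem_Icc.2 ⟨hDn p i j, ?_⟩, hcons⟩
  · have := hcons p
    linarith [hIsum p, hDsum p]
  · have h1 : I t p i ≤ ∑ i', I t p i' :=
      Finset.single_le_sum (fun i' _ => hIn p i') (Finset.mem_univ i)
    have := hcons p
    linarith [hSn p, hDsum p]
  · have h1 : Dc t p i j ≤ ∑ j', Dc t p i j' :=
      Finset.single_le_sum (fun j' _ => hDn p i j') (Finset.mem_univ j)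
    have h2 : ∑ j', Dc t p i j' ≤ ∑ i', ∑ j', Dc t p i' j' :=
      Finset.single_le_sum (f := fun i' => ∑ j', Dc t p i' j')
        (fun i' _ => Finset.sum_nonneg fun j' _ => hDn p i' j') (Finset.mem_univ i)
    have := hcons p
    linarith [hSn p, hIsum p]
end

section
/- For the single-patch single-strain SIS system with coinfection: if β ≤ r + γ, then every solution (S(t), I(t), D(t)) with initial data in Υ satisfies lim_{t→+∞}(S(t), I(t), D(t)) = (1, 0, 0). -/
open Set Filter Real

/-- Grönwall-type zero propagation: if `|f'| ≤ K |f|` on `[a,b]` and `f a = 0`,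
then `f b = 0`. -/
private lemma gronwall_zero {f f' : ℝ → ℝ} {a b K : ℝ} (hab : a ≤ b)
    (hd : ∀ t ∈ Icc a b, HasDerivAt f (f' t) t)
    (hb : ∀ t ∈ Icc a b, |f' t| ≤ K * |f t|)
    (ha : f a = 0) : f b = 0 := by
  have hc : ContinuousOn f (Icc a b) :=
    fun t ht => ((hd t ht).continuousAt).continuousWithinAt
  have h := norm_le_gronwallBound_of_norm_deriv_right_le (f := f) (f' := f')
    (δ := 0) (K := K) (ε := 0) (a := a) (b := b) hc
    (fun x hx => (hd x (Ico_subset_Icc_self hx)).hasDerivWithinAt)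
    (by simp [ha])
    (fun x hx => by
      simpa [Real.norm_eq_abs] using hb x (Ico_subset_Icc_self hx))
  have h2 := h b (right_mem_Icc.2 hab)
  rw [gronwallBound_ε0_δ0] at h2
  exact norm_le_zero_iff.mp h2

/-- If `f 0 ≥ 0` and whenever `f t ≤ 0` (with `t ≥ 0`) the derivative is nonnegative,
then `f` stays nonnegative on `[0,∞)`. -/
private lemma nonneg_of_deriv {f f' : ℝ → ℝ}
    (hd : ∀ t, 0 ≤ t → HasDerivAt f (f' t) t)
    (h0 : 0 ≤ f 0)
    (hkey : ∀ t, 0 ≤ t → f t ≤ 0 → 0 ≤ f' t) :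
    ∀ t, 0 ≤ t → 0 ≤ f t := by
  intro t₁ ht₁
  by_contra hneg
  push_neg at hneg
  have hc : ContinuousOn f (Icc 0 t₁) :=
    fun t ht => ((hd t ht.1).continuousAt).continuousWithinAt
  set Z : Set ℝ := Icc 0 t₁ ∩ f ⁻¹' {0} with hZ
  have hZclosed : IsClosed Z := hc.preimage_isClosed_of_isClosed isClosed_Icc isClosed_singleton
  have hZcomp : IsCompact Z := isCompact_Icc.of_isClosed_subset hZclosed inter_subset_left
  have hZne : Z.Nonempty := by
    obtain ⟨τ, hτmem, hfτ⟩ := intermediate_value_Icc' ht₁ hc ⟨hneg.le, h0⟩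
    exact ⟨τ, hτmem, hfτ⟩
  obtain ⟨τ, hτZ, hτub⟩ : ∃ τ, τ ∈ Z ∧ ∀ z ∈ Z, z ≤ τ :=
    ⟨sSup Z, hZcomp.sSup_mem hZne, fun z hz => le_csSup hZcomp.bddAbove hz⟩
  have hτmem : τ ∈ Icc 0 t₁ := hτZ.1
  have hfτ : f τ = 0 := hτZ.2
  have hτlt : τ < t₁ := lt_of_le_of_ne hτmem.2 (by rintro rfl; exact absurd hfτ (by linarith))
  -- f ≤ 0 on [τ, t₁]
  have hle : ∀ t ∈ Icc τ t₁, f t ≤ 0 := by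
    intro t ht
    by_contra hpos
    push_neg at hpos
    have htτ : τ < t := lt_of_le_of_ne ht.1 (by rintro rfl; linarith)
    have hc' : ContinuousOn f (Icc t t₁) :=
      hc.mono (Icc_subset_Icc (le_trans hτmem.1 ht.1) le_rfl)
    obtain ⟨τ', hτ'mem, hfτ'⟩ := intermediate_value_Icc' ht.2 hc' ⟨hneg.le, hpos.le⟩
    have hτ'Z : τ' ∈ Z :=
      ⟨⟨le_trans (le_trans hτmem.1 ht.1) hτ'mem.1, hτ'mem.2⟩, hfτ'⟩
    have := hτub τ' hτ'Z
    linarith [hτ'mem.1]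
  -- f is monotone on [τ, t₁]
  have hmono : MonotoneOn f (Icc τ t₁) := by
    apply monotoneOn_of_hasDerivWithinAt_nonneg (convex_Icc τ t₁) (hc.mono
      (Icc_subset_Icc hτmem.1 le_rfl))
    · intro x hx
      rw [interior_Icc] at hx
      exact ((hd x (le_trans hτmem.1 hx.1.le)).hasDerivWithinAt)
    · intro x hx
      rw [interior_Icc] at hx
      exact hkey x (le_trans hτmem.1 hx.1.le) (hle x ⟨hx.1.le, hx.2.le⟩)
  have := hmono (left_mem_Icc.2 hτlt.le) (right_mem_Icc.2 hτlt.le) hτlt.le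
  rw [hfτ] at this
  linarith

/-- For the single-patch single-strain SIS system with coinfection, if
`β ≤ r + γ` then every solution with initial data in `Υ` converges to `(1,0,0)`. -/
theorem sis_single_strain_subcritical_extinction
    (r γ β k : ℝ) (hr : 0 < r) (hγ : 0 ≤ γ) (hβ : 0 ≤ β) (hk : 0 ≤ k)
    (S I D : ℝ → ℝ)
    (hS : ∀ t, 0 ≤ t → HasDerivAt S
      (r * (1 - S t) + γ * I t + γ * D t - β * (I t + D t) * S t) t)
    (hI : ∀ t, 0 ≤ t → HasDerivAt I
      (β * (I t + D t) * S t - (r + γ) * I t - k * β * I t * (I t + D t)) t)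
    (hD : ∀ t, 0 ≤ t → HasDerivAt D
      (k * β * I t * (I t + D t) - (r + γ) * D t) t)
    (hinit : S 0 ∈ Set.Icc (0:ℝ) 1 ∧ I 0 ∈ Set.Icc (0:ℝ) 1 ∧ D 0 ∈ Set.Icc (0:ℝ) 1
      ∧ S 0 + I 0 + D 0 = 1)
    (hsub : β ≤ r + γ) :
    Filter.Tendsto (fun t => (S t, I t, D t)) Filter.atTop
      (nhds ((1:ℝ), (0:ℝ), (0:ℝ))) := by
  obtain ⟨hS0, hI0, hD0, hN0⟩ := hinit
  -- Step 1: the total population is constant equal to 1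
  have hN : ∀ t, 0 ≤ t → S t + I t + D t = 1 := by
    intro t ht
    have hfd : ∀ u ∈ Icc (0:ℝ) t,
        HasDerivAt (fun u => S u + I u + D u - 1)
          (-r * (S u + I u + D u - 1)) u := by
      intro u hu
      have h := (((hS u hu.1).add (hI u hu.1)).add (hD u hu.1)).sub_const 1
      exact h.congr_deriv (by ring)
    have := gronwall_zero (K := r) ht hfd
      (fun u _ => by rw [abs_mul, abs_neg, abs_of_pos hr]) (by simp [hN0])
    linarith
  have hS1 : ∀ t, 0 ≤ t → S t = 1 - (I t + D t) := by
    intro t ht; have := hN t ht; linarith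
  -- derivative of J = I + D
  have hJd : ∀ t, 0 ≤ t → HasDerivAt (fun u => I u + D u)
      ((β * S t - (r + γ)) * (I t + D t)) t := by
    intro t ht
    have h := (hI t ht).add (hD t ht)
    exact h.congr_deriv (by ring)
  -- Step 2: J ≥ 0 on [0, ∞)
  have hJ0 : ∀ t, 0 ≤ t → 0 ≤ I t + D t := by
    intro t₁ ht₁
    by_contra hneg
    push_neg at hneg
    have hc : ContinuousOn (fun u => I u + D u) (Icc 0 t₁) :=
      fun t ht => ((hJd t ht.1).continuousAt).continuousWithinAt
    have hJ0nn : (0:ℝ) ≤ I 0 + D 0 := by linarith [hI0.1, hD0.1]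
    obtain ⟨τ, hτmem, hfτ⟩ := intermediate_value_Icc' ht₁ hc ⟨hneg.le, hJ0nn⟩
    have hac : ContinuousOn (fun u => β * S u - (r + γ)) (Icc 0 t₁) := by
      apply ContinuousOn.sub _ continuousOn_const
      exact continuousOn_const.mul
        (fun t ht => ((hS t ht.1).continuousAt).continuousWithinAt)
    obtain ⟨K, hK⟩ := isCompact_Icc.exists_bound_of_continuousOn hac
    have := gronwall_zero (f := fun u => I u + D u)
      (f' := fun u => (β * S u - (r + γ)) * (I u + D u)) (K := K) hτmem.2
      (fun u hu => hJd u (le_trans hτmem.1 hu.1))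
      (fun u hu => by
        rw [abs_mul]
        apply mul_le_mul_of_nonneg_right _ (abs_nonneg _)
        have := hK u ⟨le_trans hτmem.1 hu.1, hu.2⟩
        simpa [Real.norm_eq_abs] using this)
      hfτ
    have h2 : I t₁ + D t₁ = 0 := this
    linarith
  have hSle1 : ∀ t, 0 ≤ t → S t ≤ 1 := by
    intro t ht; rw [hS1 t ht]; linarith [hJ0 t ht]
  -- Step 3: J is antitone on [0, ∞)
  have hJanti : AntitoneOn (fun u => I u + D u) (Ici 0) := by
    apply antitoneOn_of_hasDerivWithinAt_nonpos (convex_Ici 0)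
      (fun t ht => ((hJd t ht).continuousAt).continuousWithinAt)
      (f' := fun u => (β * S u - (r + γ)) * (I u + D u))
    · intro x hx
      rw [interior_Ici] at hx
      exact (hJd x hx.le).hasDerivWithinAt
    · intro x hx
      rw [interior_Ici] at hx
      apply mul_nonpos_of_nonpos_of_nonneg _ (hJ0 x hx.le)
      have := hSle1 x hx.le
      nlinarith
  have hJle : ∀ t, 0 ≤ t → I t + D t ≤ I 0 + D 0 :=
    fun t ht => hJanti (self_mem_Ici) ht ht
  have hSnn : ∀ t, 0 ≤ t → 0 ≤ S t := by
    intro t ht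
    rw [hS1 t ht]
    have h1 := hJle t ht
    have : I 0 + D 0 ≤ 1 := by linarith [hS0.1, hN0]
    linarith
  -- Step 4: I ≥ 0 on [0, ∞)
  have hInn : ∀ t, 0 ≤ t → 0 ≤ I t := by
    apply nonneg_of_deriv hI hI0.1
    intro t ht hIle
    have h1 : 0 ≤ β * (I t + D t) * S t :=
      mul_nonneg (mul_nonneg hβ (hJ0 t ht)) (hSnn t ht)
    have h2 : (r + γ) * I t ≤ 0 := mul_nonpos_of_nonneg_of_nonpos (by linarith) hIle
    have h3 : k * β * I t * (I t + D t) ≤ 0 :=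
      mul_nonpos_of_nonpos_of_nonneg
        (mul_nonpos_of_nonneg_of_nonpos (mul_nonneg hk hβ) hIle) (hJ0 t ht)
    linarith
  -- Step 5: D ≥ 0 on [0, ∞)
  have hDnn : ∀ t, 0 ≤ t → 0 ≤ D t := by
    apply nonneg_of_deriv hD hD0.1
    intro t ht hDle
    have h1 : 0 ≤ k * β * I t * (I t + D t) :=
      mul_nonneg (mul_nonneg (mul_nonneg hk hβ) (hInn t ht)) (hJ0 t ht)
    have h2 : (r + γ) * D t ≤ 0 := mul_nonpos_of_nonneg_of_nonpos (by linarith) hDle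
    linarith
  -- Step 6: J converges to its infimum L
  set Jm : ℝ → ℝ := fun t => I (max t 0) + D (max t 0) with hJmdef
  have hJmanti : Antitone Jm := by
    intro s t hst
    exact hJanti (le_max_right s 0) (le_max_right t 0) (max_le_max hst le_rfl)
  have hbdd : BddBelow (range Jm) := by
    refine ⟨0, ?_⟩
    rintro x ⟨t, rfl⟩
    exact hJ0 _ (le_max_right t 0)
  set L := ⨅ t, Jm t with hLdef
  have htendJm : Tendsto Jm atTop (nhds L) := tendsto_atTop_ciInf hJmanti hbdd
  have hL0 : 0 ≤ L := le_ciInf fun t => hJ0 _ (le_max_right t 0)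
  have hJL : ∀ t, 0 ≤ t → L ≤ I t + D t := by
    intro t ht
    have := ciInf_le hbdd t
    simpa [Jm, max_eq_left ht] using this
  -- Step 7: L = 0
  have hLzero : L = 0 := by
    by_contra hLne
    have hL : 0 < L := lt_of_le_of_ne hL0 (Ne.symm hLne)
    set c := (r + γ - β) * L + β * L * L with hcdef
    have hc : 0 < c := by
      rw [hcdef]
      rcases lt_or_eq_of_le hsub with h | h
      · nlinarith [mul_pos (sub_pos.2 h) hL, mul_nonneg (mul_nonneg hβ hL0) hL0]
      · have hβpos : 0 < β := by linarith
        nlinarith [mul_pos (mul_pos hβpos hL) hL]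
    -- g = J + c t is antitone on [0, ∞)
    have hgd : ∀ t, 0 ≤ t → HasDerivAt (fun u => (I u + D u) + c * u)
        ((β * S t - (r + γ)) * (I t + D t) + c) t := by
      intro t ht
      have h := (hJd t ht).add ((hasDerivAt_id t).const_mul c)
      exact h.congr_deriv (by ring)
    have hganti : AntitoneOn (fun u => (I u + D u) + c * u) (Ici 0) := by
      apply antitoneOn_of_hasDerivWithinAt_nonpos (convex_Ici 0)
        (f' := fun u => (β * S u - (r + γ)) * (I u + D u) + c)
        (fun t ht => ((hgd t ht).continuousAt).continuousWithinAt)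
      · intro x hx
        rw [interior_Ici] at hx
        exact (hgd x hx.le).hasDerivWithinAt
      · intro x hx
        rw [interior_Ici] at hx
        have hJx := hJL x hx.le
        have hSx := hS1 x hx.le
        have h1 : 0 ≤ (r + γ - β) * ((I x + D x) - L) :=
          mul_nonneg (by linarith) (by linarith)
        have h2 : 0 ≤ β * ((I x + D x) - L) * ((I x + D x) + L) :=
          mul_nonneg (mul_nonneg hβ (by linarith)) (by linarith)
        rw [hSx, hcdef]
        nlinarith [h1, h2]
    set T := max ((I 0 + D 0 - L) / c + 1) 0 with hTdef
    have hT0 : 0 ≤ T := le_max_right _ _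
    have hgT := hganti self_mem_Ici hT0 hT0
    simp only [mul_zero, add_zero] at hgT
    have hJT : L ≤ I T + D T := hJL T hT0
    have hcT : (I 0 + D 0 - L) + c ≤ c * T := by
      have h := mul_le_mul_of_nonneg_left (le_max_left ((I 0 + D 0 - L) / c + 1) 0) hc.le
      calc (I 0 + D 0 - L) + c = c * ((I 0 + D 0 - L) / c + 1) := by
            field_simp
          _ ≤ c * T := h
    linarith
  rw [hLzero] at htendJm
  -- transfer limit from Jm to J
  have hJtend : Tendsto (fun t => I t + D t) atTop (nhds 0) := by
    apply htendJm.congr'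
    filter_upwards [eventually_ge_atTop (0:ℝ)] with t ht
    simp [Jm, max_eq_left ht]
  -- limits of S, I, D
  have hStend : Tendsto S atTop (nhds 1) := by
    have h1 : Tendsto (fun t => 1 - (I t + D t)) atTop (nhds 1) := by
      simpa using tendsto_const_nhds.sub hJtend
    apply h1.congr'
    filter_upwards [eventually_ge_atTop (0:ℝ)] with t ht
    exact (hS1 t ht).symm
  have hItend : Tendsto I atTop (nhds 0) := by
    apply tendsto_of_tendsto_of_tendsto_of_le_of_le' tendsto_const_nhds hJtend
    · filter_upwards [eventually_ge_atTop (0:ℝ)] with t ht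
      exact hInn t ht
    · filter_upwards [eventually_ge_atTop (0:ℝ)] with t ht
      have := hDnn t ht
      linarith
  have hDtend : Tendsto D atTop (nhds 0) := by
    apply tendsto_of_tendsto_of_tendsto_of_le_of_le' tendsto_const_nhds hJtend
    · filter_upwards [eventually_ge_atTop (0:ℝ)] with t ht
      exact hDnn t ht
    · filter_upwards [eventually_ge_atTop (0:ℝ)] with t ht
      have := hInn t ht
      linarith
  exact hStend.prodMk_nhds (hItend.prodMk_nhds hDtend)
end

section
/- For the single-patch single-strain SIS system with coinfection: if β > r + γ, then every solution (S(t), I(t), D(t)) with initial data in Υ₀ converges to the endemic equilibrium (S*, I*, D*), and the convergence is exponential: there exist M > 0 and μ > 0 such that for all t ≥ 0, |S(t) − S*| + |I(t) − I*| + |D(t) − D*| ≤ M e^{−μt}. -/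
open Set

private lemma sis_const_of_deriv_zero {f : ℝ → ℝ} {t : ℝ} (ht : 0 ≤ t)
    (hf : ∀ s ∈ Icc (0:ℝ) t, HasDerivAt f 0 s) : f t = f 0 :=
  constant_of_has_deriv_right_zero
    (fun s hs => (hf s hs).continuousAt.continuousWithinAt)
    (fun s hs => (hf s (Ico_subset_Icc_self hs)).hasDerivWithinAt)
    t (right_mem_Icc.2 ht)

private lemma sis_le_of_deriv_nonpos {f f' : ℝ → ℝ} {t : ℝ} (ht : 0 ≤ t)
    (hf : ∀ s ∈ Icc (0:ℝ) t, HasDerivAt f (f' s) s)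
    (hf' : ∀ s ∈ Icc (0:ℝ) t, f' s ≤ 0) : f t ≤ f 0 := by
  have h := antitoneOn_of_deriv_nonpos (convex_Icc (0:ℝ) t)
    (fun s hs => (hf s hs).continuousAt.continuousWithinAt)
    (fun s hs => by
      rw [interior_Icc] at hs
      exact (hf s (Ioo_subset_Icc_self hs)).differentiableAt.differentiableWithinAt)
    (fun s hs => by
      rw [interior_Icc] at hs
      rw [(hf s (Ioo_subset_Icc_self hs)).deriv]
      exact hf' s (Ioo_subset_Icc_self hs))
  exact h (left_mem_Icc.2 ht) (right_mem_Icc.2 ht) ht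

private lemma sis_sqrt_add_le (x y : ℝ) (hx : 0 ≤ x) (hy : 0 ≤ y) :
    Real.sqrt (x + y) ≤ Real.sqrt x + Real.sqrt y := by
  have h : Real.sqrt (x + y) ≤ Real.sqrt ((Real.sqrt x + Real.sqrt y)^2) :=
    Real.sqrt_le_sqrt (by nlinarith [Real.sq_sqrt hx, Real.sq_sqrt hy, Real.sqrt_nonneg x, Real.sqrt_nonneg y])
  rwa [Real.sqrt_sq (by positivity)] at h

private lemma sis_quad_step (rg c lam e g Y : ℝ) (hrg : 0 < rg) (hc : rg ≤ c)
    (hlam1 : lam ≤ rg) (hg2 : g ^ 2 ≤ Y) :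
    (2 * e * (-c * e + g) + lam * e ^ 2) * rg ≤ Y := by
  have h1 := sq_nonneg (rg * e - g)
  have h2 : 0 ≤ rg * e ^ 2 * (c - rg) :=
    mul_nonneg (mul_nonneg hrg.le (sq_nonneg e)) (sub_nonneg.2 hc)
  have h3 : 0 ≤ rg * e ^ 2 * (rg - lam) :=
    mul_nonneg (mul_nonneg hrg.le (sq_nonneg e)) (sub_nonneg.2 hlam1)
  nlinarith [h1, h2, h3, hg2]

private lemma sis_div_step (Z rg : ℝ) (hrg : 0 < rg) (h : Z * rg ≤ 0) : Z ≤ 0 := by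
  nlinarith

private lemma sis_assemble (x st s4 sV sK E2 E8 E3 : ℝ) (hsV : 0 ≤ sV) (hsK : 0 ≤ sK)
    (hs4 : 0 ≤ s4) (hE2 : 0 ≤ E2) (hst0 : 0 ≤ st) (hE8 : 0 ≤ E8)
    (h1 : x ≤ (sV + sK * st) * E2) (hst : st ≤ s4 * E8)
    (h2 : E2 * E8 ≤ E3) (h3 : E2 ≤ E3) :
    x ≤ (sV + sK * s4) * E3 := by
  have a1 : sK * st * E2 ≤ sK * (s4 * E8) * E2 :=
    mul_le_mul_of_nonneg_right (mul_le_mul_of_nonneg_left hst hsK) hE2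
  have a2 : sK * s4 * (E2 * E8) ≤ sK * s4 * E3 :=
    mul_le_mul_of_nonneg_left h2 (mul_nonneg hsK hs4)
  have a3 : sV * E2 ≤ sV * E3 := mul_le_mul_of_nonneg_left h3 hsV
  nlinarith [a1, a2, a3, h1]
set_option maxHeartbeats 4000000 in
/-- For the single-patch single-strain SIS system with coinfection, if
`β > r + γ` then every solution with initial data in `Υ₀ = Υ ∖ {(1,0,0)}` converges
exponentially to the endemic equilibrium `(S*, I*, D*)`. -/
theorem sis_single_strain_supercritical_endemic_convergence
    (r γ β k : ℝ) (hr : 0 < r) (hγ : 0 ≤ γ) (hβ : 0 ≤ β) (hk : 0 ≤ k)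
    (S I D : ℝ → ℝ)
    (hS : ∀ t, 0 ≤ t → HasDerivAt S
      (r * (1 - S t) + γ * I t + γ * D t - β * (I t + D t) * S t) t)
    (hI : ∀ t, 0 ≤ t → HasDerivAt I
      (β * (I t + D t) * S t - (r + γ) * I t - k * β * I t * (I t + D t)) t)
    (hD : ∀ t, 0 ≤ t → HasDerivAt D
      (k * β * I t * (I t + D t) - (r + γ) * D t) t)
    (hinit : S 0 ∈ Set.Icc (0:ℝ) 1 ∧ I 0 ∈ Set.Icc (0:ℝ) 1 ∧ D 0 ∈ Set.Icc (0:ℝ) 1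
      ∧ S 0 + I 0 + D 0 = 1)
    (hnotE0 : (S 0, I 0, D 0) ≠ ((1:ℝ), (0:ℝ), (0:ℝ)))
    (hsup : r + γ < β)
    (Sstar Tstar Istar Dstar : ℝ)
    (hSstar : Sstar = (r + γ) / β)
    (hTstar : Tstar = 1 - Sstar)
    (hIstar : Istar = β * Tstar * Sstar / (r + γ + k * β * Tstar))
    (hDstar : Dstar = k * β * Tstar * Istar / (r + γ)) :
    ∃ M > (0:ℝ), ∃ μ > (0:ℝ), ∀ t, 0 ≤ t →
      |S t - Sstar| + |I t - Istar| + |D t - Dstar| ≤ M * Real.exp (-μ * t) := by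
  obtain ⟨hS0, hI0, hD0, hsum0⟩ := hinit
  set a : ℝ := β - (r + γ) with ha
  have ha0 : 0 < a := by simp only [ha]; linarith
  have hβ0 : 0 < β := by linarith
  have hrγ : 0 < r + γ := by linarith
  set T : ℝ → ℝ := fun s => I s + D s with hTdef
  -- Step A : S + I + D ≡ 1 on t ≥ 0
  have hN : ∀ t, 0 ≤ t → S t + I t + D t = 1 := by
    intro t ht
    have key : (S t + I t + D t - 1) * Real.exp (r * t)
        = (S 0 + I 0 + D 0 - 1) * Real.exp (r * 0) := by
      exact sis_const_of_deriv_zero (f := fun s => (S s + I s + D s - 1) * Real.exp (r * s)) ht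
        (fun s hs => by
          have h1 := ((hS s hs.1).add (hI s hs.1)).add (hD s hs.1)
          have h2 : HasDerivAt (fun u => Real.exp (r * u)) (Real.exp (r * s) * r) s := by
            simpa using ((hasDerivAt_id s).const_mul r).exp
          have h3 := (h1.sub_const 1).mul h2
          refine h3.congr_deriv (Eq.symm ?_)
          simp only [Pi.add_apply]
          ring)
    rw [hsum0] at key
    simp only [sub_self, zero_mul] at key
    rcases mul_eq_zero.1 key with h | h
    · linarith
    · exact absurd h (Real.exp_ne_zero _)
  have hSt : ∀ t, 0 ≤ t → S t = 1 - T t := by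
    intro t ht; have := hN t ht; simp only [hTdef]; linarith
  -- Step B : logistic dynamics for T
  have hT : ∀ t, 0 ≤ t → HasDerivAt T (T t * (a - β * T t)) t := by
    intro t ht
    have h := (hI t ht).add (hD t ht)
    refine h.congr_deriv (Eq.symm ?_)
    rw [hSt t ht]
    simp only [hTdef, ha]
    ring
  -- Step C : T remains positive
  have hT0 : 0 < T 0 := by
    rcases lt_or_eq_of_le (add_nonneg hI0.1 hD0.1) with h | h
    · exact h
    · exfalso
      have hI00 : I 0 = 0 := by linarith [hI0.1, hD0.1]
      have hD00 : D 0 = 0 := by linarith [hI0.1, hD0.1]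
      exact hnotE0 (by rw [Prod.mk.injEq, Prod.mk.injEq, hI00, hD00]; refine ⟨by linarith, rfl, rfl⟩)
  have hTcontIci : ContinuousOn T (Set.Ici (0:ℝ)) :=
    fun s hs => ((hT s hs).continuousAt).continuousWithinAt
  have hgc : Continuous (fun s : ℝ => a - β * T (max s 0)) := by
    have : Continuous (fun s : ℝ => T (max s 0)) :=
      hTcontIci.comp_continuous (continuous_id.max continuous_const) (fun x => Set.mem_Ici.2 (le_max_right _ _))
    continuity
  set g : ℝ → ℝ := fun s => a - β * T (max s 0) with hgdef
  set h : ℝ → ℝ := fun s => ∫ x in (0:ℝ)..s, g x with hhdef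
  have hh : ∀ s : ℝ, HasDerivAt h (g s) s := fun s =>
    (hgc.integral_hasStrictDerivAt 0 s).hasDerivAt
  have hTpos : ∀ t, 0 ≤ t → 0 < T t := by
    intro t ht
    have key : T t * Real.exp (-(h t)) = T 0 * Real.exp (-(h 0)) := by
      exact sis_const_of_deriv_zero (f := fun s => T s * Real.exp (-(h s))) ht
        (fun s hs => by
          have hexp : HasDerivAt (fun u => Real.exp (-(h u))) (Real.exp (-(h s)) * (-(g s))) s :=
            ((hh s).neg).exp
          have h3 := (hT s hs.1).mul hexp
          refine h3.congr_deriv (Eq.symm ?_)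
          have hmax : max s 0 = s := max_eq_left hs.1
          simp only [hgdef, hmax]
          ring)
    nlinarith [Real.exp_pos (-(h t)), Real.exp_pos (-(h 0)), hT0]
  clear_value g h
  clear hh hgc hhdef hgdef h g
  -- Step D : explicit formula for 1/T
  set q : ℝ := β / a with hq
  have hq1 : 1 < q := by rw [hq]; rw [lt_div_iff₀ ha0]; simp only [ha]; linarith
  set u0 : ℝ := (T 0)⁻¹ with hu0
  have hU : ∀ t, 0 ≤ t → (T t)⁻¹ = q + (u0 - q) * Real.exp (-(a * t)) := by
    intro t ht
    have key : ((T t)⁻¹ - q) * Real.exp (a * t) = ((T 0)⁻¹ - q) * Real.exp (a * 0) := by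
      exact sis_const_of_deriv_zero (f := fun s => ((T s)⁻¹ - q) * Real.exp (a * s)) ht
        (fun s hs => by
          have hTs := hTpos s hs.1
          have hinv : HasDerivAt (fun u => (T u)⁻¹)
              (-(T s * (a - β * T s)) / (T s)^2) s := (hT s hs.1).inv hTs.ne'
          have hexp : HasDerivAt (fun u => Real.exp (a * u)) (Real.exp (a * s) * a) s := by
            simpa using ((hasDerivAt_id s).const_mul a).exp
          have h3 := (hinv.sub_const q).mul hexp
          refine h3.congr_deriv (Eq.symm ?_)
          have h4 : -(T s * (a - β * T s)) / (T s)^2 = β - a * (T s)⁻¹ := by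
            field_simp
            ring
          rw [h4]
          simp only [hq]
          field_simp
          ring)
    have hexp1 : Real.exp (a * t) * Real.exp (-(a * t)) = 1 := by
      rw [← Real.exp_add]; simp
    rw [mul_zero, Real.exp_zero, mul_one] at key
    rw [← hu0] at key
    linear_combination Real.exp (-(a * t)) * key + (q - (T t)⁻¹) * hexp1
  have hT01 : T 0 ≤ 1 := by simp only [hTdef]; linarith [hS0.1]
  have hu0pos : 0 < u0 := by rw [hu0]; exact inv_pos.2 hT0
  have hu01 : 1 ≤ u0 := by
    have hinv : T 0 * u0 = 1 := by rw [hu0]; exact mul_inv_cancel₀ hT0.ne'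
    nlinarith
  have huge : ∀ t, 0 ≤ t → 1 ≤ (T t)⁻¹ := by
    intro t ht
    rw [hU t ht]
    have hE1 : Real.exp (-(a * t)) ≤ 1 := by
      rw [Real.exp_le_one_iff]; exact neg_nonpos.2 (mul_nonneg ha0.le ht)
    have hE0 : 0 < Real.exp (-(a * t)) := Real.exp_pos _
    linarith [mul_nonneg (sub_nonneg.2 hu01) hE0.le,
      mul_nonneg (sub_nonneg.2 hq1.le) (sub_nonneg.2 hE1)]
  have hTle1 : ∀ t, 0 ≤ t → T t ≤ 1 := by
    intro t ht
    have h1 := huge t ht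
    have h2 := hTpos t ht
    have h3 : T t * (T t)⁻¹ = 1 := mul_inv_cancel₀ h2.ne'
    have h4 := mul_le_mul_of_nonneg_left h1 h2.le
    rw [mul_one, h3] at h4
    exact h4
  -- Tstar = a / β and basic facts
  have hTstar' : Tstar = a / β := by
    rw [hTstar, hSstar, ha]; field_simp
  have hTstar_pos : 0 < Tstar := by rw [hTstar']; positivity
  have hTstar_lt1 : Tstar < 1 := by
    rw [hTstar']; rw [div_lt_one hβ0]; simp only [ha]; linarith
  set CT : ℝ := |q - u0| with hCT
  have hTbound : ∀ t, 0 ≤ t → |T t - Tstar| ≤ CT * Real.exp (-(a * t)) := by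
    intro t ht
    have h2 := hTpos t ht
    have heq : T t - Tstar = (q - u0) * Real.exp (-(a * t)) * (T t * Tstar) := by
      have h5 := hU t ht
      have hTstarq : Tstar * q = 1 := by
        rw [hTstar', hq]; field_simp
      have hTinv : T t * (T t)⁻¹ = 1 := mul_inv_cancel₀ h2.ne'
      calc T t - Tstar = T t * Tstar * (q - (T t)⁻¹)
              + (T t * (T t)⁻¹ - 1) * Tstar + T t * (Tstar * q - 1) * (-1) := by ring
        _ = (q - u0) * Real.exp (-(a * t)) * (T t * Tstar) := by
            rw [hTinv, hTstarq, h5]; ring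
    rw [heq]
    rw [abs_mul, abs_mul]
    have hE0 : (0:ℝ) ≤ Real.exp (-(a * t)) := (Real.exp_pos _).le
    have h6 : |Real.exp (-(a * t))| = Real.exp (-(a * t)) := abs_of_nonneg hE0
    have h7 : |T t * Tstar| ≤ 1 := by
      rw [abs_of_nonneg (mul_nonneg h2.le hTstar_pos.le)]
      have := mul_le_mul (hTle1 t ht) hTstar_lt1.le hTstar_pos.le zero_le_one
      simpa using this
    rw [h6, ← hCT]
    have hCT0 : 0 ≤ CT := abs_nonneg _
    have h8 := mul_le_mul_of_nonneg_left h7 (mul_nonneg hCT0 hE0)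
    rw [mul_one] at h8
    exact h8
  -- Step E : equilibrium identities
  have hCT0 : 0 ≤ CT := by rw [hCT]; exact abs_nonneg _
  have hkβT : 0 ≤ k * β * Tstar := mul_nonneg (mul_nonneg hk hβ) hTstar_pos.le
  have hden : 0 < r + γ + k * β * Tstar := by linarith only [hrγ, hkβT]
  have hIeq : (r + γ + k * β * Tstar) * Istar = β * Tstar * Sstar := by
    rw [hIstar]; field_simp
  have hβS : β * Sstar = r + γ := by rw [hSstar]; field_simp
  have hSstar_pos : 0 < Sstar := by rw [hSstar]; positivity
  have hIstar_nonneg : 0 ≤ Istar := by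
    rw [hIstar]
    apply div_nonneg _ hden.le
    positivity
  have hIeq2 : (r + γ + k * β * Tstar) * Istar = Tstar * (r + γ) := by
    rw [hIeq]; linear_combination Tstar * hβS
  have hIstar_le : Istar ≤ Tstar := by
    have h1 : 0 ≤ k * β * Tstar * Tstar := mul_nonneg hkβT hTstar_pos.le
    nlinarith only [hIeq2, h1, hden, hIstar_nonneg]
  have hIDsum : Istar + Dstar = Tstar := by
    rw [hDstar]
    field_simp
    linear_combination hIeq + Tstar * hβS
  -- Step F : error dynamics for I
  set ee : ℝ → ℝ := fun s => I s - Istar with heedef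
  set gg : ℝ → ℝ := fun s =>
    β * (T s * S s - Tstar * Sstar) - k * β * (T s - Tstar) * Istar with hggdef
  have hee : ∀ t, 0 ≤ t →
      HasDerivAt ee (-(r + γ + k * β * T t) * ee t + gg t) t := by
    intro t ht
    have h1 := (hI t ht).sub_const Istar
    refine h1.congr_deriv (Eq.symm ?_)
    simp only [heedef, hggdef, hTdef]
    linear_combination hIeq
  set K : ℝ := β * (1 + k) * CT with hKdef
  have hK0 : 0 ≤ K := mul_nonneg (mul_nonneg hβ (by linarith only [hk])) hCT0
  have hgg_bound : ∀ t, 0 ≤ t → |gg t| ≤ K * Real.exp (-(a * t)) := by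
    intro t ht
    have hd := hTbound t ht
    have h2 := hTpos t ht
    have h3 := hTle1 t ht
    have hE0 : (0:ℝ) ≤ Real.exp (-(a * t)) := (Real.exp_pos _).le
    have hSstar' : Sstar = 1 - Tstar := by rw [hTstar]; ring
    have hfact : gg t = β * ((T t - Tstar) * (1 - T t - Tstar))
        - k * β * ((T t - Tstar) * Istar) := by
      simp only [hggdef]
      rw [hSt t ht, hSstar']
      ring
    have habs1 : |1 - T t - Tstar| ≤ 1 := by
      rw [abs_le]; constructor <;> [linarith only [h3, hTstar_lt1]; linarith only [h2, hTstar_pos]]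
    have habsI : |Istar| ≤ 1 := by
      rw [abs_of_nonneg hIstar_nonneg]; linarith only [hIstar_le, hTstar_lt1]
    have hm1 : |T t - Tstar| * |1 - T t - Tstar| ≤ CT * Real.exp (-(a * t)) * 1 :=
      mul_le_mul hd habs1 (abs_nonneg _) (mul_nonneg hCT0 hE0)
    have hm2 : |T t - Tstar| * |Istar| ≤ CT * Real.exp (-(a * t)) * 1 :=
      mul_le_mul hd habsI (abs_nonneg _) (mul_nonneg hCT0 hE0)
    have h5 : |gg t| ≤ β * (|T t - Tstar| * |1 - T t - Tstar|)
        + k * β * (|T t - Tstar| * |Istar|) := by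
      rw [hfact]
      refine (abs_sub _ _).trans ?_
      simp only [abs_mul, abs_of_nonneg hβ, abs_of_nonneg hk]
      apply le_of_eq
      ring
    refine h5.trans ?_
    have hh1 := mul_le_mul_of_nonneg_left hm1 hβ
    have hh2 := mul_le_mul_of_nonneg_left hm2 (mul_nonneg hk hβ)
    simp only [hKdef]
    linarith only [hh1, hh2]
  -- Step G : Lyapunov estimate
  set lam : ℝ := min (r + γ) a with hlamdef
  have hlam0 : 0 < lam := lt_min hrγ ha0
  have hlam1 : lam ≤ r + γ := min_le_left _ _
  have hlam2 : lam ≤ a := min_le_right _ _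
  set K2 : ℝ := K ^ 2 / (r + γ) with hK2def
  have hK20 : 0 ≤ K2 := div_nonneg (sq_nonneg _) hrγ.le
  have hK2eq : K2 * (r + γ) = K ^ 2 := by
    rw [hK2def]; field_simp
  have hVbound : ∀ t, 0 ≤ t →
      (ee t) ^ 2 * Real.exp (lam * t) - K2 * t ≤ (ee 0) ^ 2 := by
    intro t ht
    have hmain := sis_le_of_deriv_nonpos (t := t)
      (f := fun s => (ee s) ^ 2 * Real.exp (lam * s) - K2 * s)
      (f' := fun s => ((2 * ee s * (-(r + γ + k * β * T s) * ee s + gg s)) * Real.exp (lam * s)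
        + (ee s) ^ 2 * (Real.exp (lam * s) * lam)) - K2) ht
      (fun s hs => by
        have h1 : HasDerivAt (fun u => (ee u) ^ 2)
            (2 * ee s * (-(r + γ + k * β * T s) * ee s + gg s)) s := by
          have h0 := (hee s hs.1).pow 2
          refine h0.congr_deriv (Eq.symm ?_)
          ring
        have h2 : HasDerivAt (fun u => Real.exp (lam * u)) (Real.exp (lam * s) * lam) s := by
          simpa using ((hasDerivAt_id s).const_mul lam).exp
        have h4 : HasDerivAt (fun u : ℝ => K2 * u) K2 s := by
          simpa using (hasDerivAt_id s).const_mul K2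
        exact (h1.mul h2).sub h4)
      (fun s hs => by
        have hgb := hgg_bound s hs.1
        have hTs0 := (hTpos s hs.1).le
        have hcs : r + γ ≤ r + γ + k * β * T s := by
          have := mul_nonneg (mul_nonneg hk hβ) hTs0
          linarith only [this]
        have hEs : (0:ℝ) < Real.exp (lam * s) := Real.exp_pos _
        have hg2 : (gg s) ^ 2 ≤ K ^ 2 * Real.exp (-(2 * a * s)) := by
          have h4 : (gg s) ^ 2 ≤ (K * Real.exp (-(a * s))) ^ 2 := by
            rw [← sq_abs (gg s)]
            exact pow_le_pow_left₀ (abs_nonneg _) hgb 2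
          refine h4.trans (le_of_eq ?_)
          have h5 : Real.exp (-(a * s)) ^ 2 = Real.exp (-(2 * a * s)) := by
            rw [pow_two, ← Real.exp_add]; congr 1; ring
          rw [mul_pow, h5]
        have hEE : Real.exp (-(2 * a * s)) * Real.exp (lam * s) ≤ 1 := by
          rw [← Real.exp_add, Real.exp_le_one_iff]
          have q1 : 0 ≤ (a - lam) * s := mul_nonneg (by linarith) hs.1
          have q2 : 0 ≤ a * s := mul_nonneg ha0.le hs.1
          linarith only [q1, q2]
        have hstep := sis_quad_step (r + γ) (r + γ + k * β * T s) lam (ee s) (gg s)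
          (K ^ 2 * Real.exp (-(2 * a * s))) hrγ hcs hlam1 hg2
        have m1 := mul_le_mul_of_nonneg_right hstep hEs.le
        have m2 : K ^ 2 * Real.exp (-(2 * a * s)) * Real.exp (lam * s) ≤ K2 * (r + γ) := by
          rw [hK2eq, mul_assoc]
          calc K ^ 2 * (Real.exp (-(2 * a * s)) * Real.exp (lam * s))
              ≤ K ^ 2 * 1 := mul_le_mul_of_nonneg_left hEE (sq_nonneg K)
            _ = K ^ 2 := mul_one _
        refine sis_div_step _ _ hrγ ?_
        show ((2 * ee s * (-(r + γ + k * β * T s) * ee s + gg s)) * Real.exp (lam * s)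
          + (ee s) ^ 2 * (Real.exp (lam * s) * lam) - K2) * (r + γ) ≤ 0
        linarith only [m1, m2])
    have h0 : ((fun s => (ee s) ^ 2 * Real.exp (lam * s) - K2 * s) : ℝ → ℝ) 0
        = (ee 0) ^ 2 := by
      simp
    simp only [mul_zero, Real.exp_zero, mul_one, sub_zero] at hmain
    exact hmain
  -- convert to pointwise bound on |ee|
  set V0 : ℝ := (ee 0) ^ 2 with hV0def
  have hV00 : 0 ≤ V0 := sq_nonneg _
  have heebound : ∀ t, 0 ≤ t → |ee t|
      ≤ (Real.sqrt V0 + Real.sqrt K2 * Real.sqrt t) * Real.exp (-(lam / 2) * t) := by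
    intro t ht
    have h1 := hVbound t ht
    have hEt : 0 < Real.exp (lam * t) := Real.exp_pos _
    have h2 : (ee t) ^ 2 ≤ (V0 + K2 * t) * Real.exp (-(lam * t)) := by
      rw [Real.exp_neg, ← div_eq_mul_inv, le_div_iff₀ hEt]
      linarith only [h1]
    have h3 : |ee t| = Real.sqrt ((ee t) ^ 2) := (Real.sqrt_sq_eq_abs _).symm
    rw [h3]
    refine (Real.sqrt_le_sqrt h2).trans ?_
    rw [Real.sqrt_mul (by positivity)]
    have h5 : Real.sqrt (V0 + K2 * t) ≤ Real.sqrt V0 + Real.sqrt K2 * Real.sqrt t := by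
      have h6 := sis_sqrt_add_le V0 (K2 * t) hV00 (mul_nonneg hK20 ht)
      rwa [Real.sqrt_mul hK20] at h6
    have h6 : Real.sqrt (Real.exp (-(lam * t))) = Real.exp (-(lam / 2) * t) := by
      have h7 : Real.exp (-(lam * t)) = (Real.exp (-(lam / 2) * t)) ^ 2 := by
        rw [sq, ← Real.exp_add]
        ring_nf
      rw [h7, Real.sqrt_sq (Real.exp_pos _).le]
    rw [h6]
    exact mul_le_mul_of_nonneg_right h5 (Real.exp_pos _).le
  -- tame the sqrt t factor
  set CI : ℝ := Real.sqrt V0 + Real.sqrt K2 * Real.sqrt (4 / lam) with hCIdef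
  have hIbound : ∀ t, 0 ≤ t → |ee t| ≤ CI * Real.exp (-(lam / 8) * t) := by
    intro t ht
    have h1 := heebound t ht
    have hst : Real.sqrt t ≤ Real.sqrt (4 / lam) * Real.exp (lam / 8 * t) := by
      have h4 : lam / 4 * t ≤ Real.exp (lam / 4 * t) := by
        linarith only [Real.add_one_le_exp (lam / 4 * t)]
      have h2 : t ≤ 4 / lam * Real.exp (lam / 4 * t) := by
        rw [div_mul_eq_mul_div, le_div_iff₀ hlam0]
        linarith only [h4]
      calc Real.sqrt t ≤ Real.sqrt (4 / lam * Real.exp (lam / 4 * t)) := Real.sqrt_le_sqrt h2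
        _ = Real.sqrt (4 / lam) * Real.sqrt (Real.exp (lam / 4 * t)) := by
            rw [Real.sqrt_mul (by positivity)]
        _ = Real.sqrt (4 / lam) * Real.exp (lam / 8 * t) := by
            congr 1
            have h7 : Real.exp (lam / 4 * t) = (Real.exp (lam / 8 * t)) ^ 2 := by
              rw [sq, ← Real.exp_add]; ring_nf
            rw [h7, Real.sqrt_sq (Real.exp_pos _).le]
    have hE2 : Real.exp (-(lam / 2) * t) * Real.exp (lam / 8 * t)
        ≤ Real.exp (-(lam / 8) * t) := by
      rw [← Real.exp_add, Real.exp_le_exp]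
      have := mul_nonneg hlam0.le ht
      linarith only [this]
    have hE3 : Real.exp (-(lam / 2) * t) ≤ Real.exp (-(lam / 8) * t) := by
      rw [Real.exp_le_exp]
      have := mul_nonneg hlam0.le ht
      linarith only [this]
    rw [hCIdef]
    exact sis_assemble (|ee t|) (Real.sqrt t) (Real.sqrt (4 / lam)) (Real.sqrt V0)
      (Real.sqrt K2) (Real.exp (-(lam / 2) * t)) (Real.exp (lam / 8 * t))
      (Real.exp (-(lam / 8) * t)) (Real.sqrt_nonneg _) (Real.sqrt_nonneg _)
      (Real.sqrt_nonneg _) (Real.exp_pos _).le (Real.sqrt_nonneg _) (Real.exp_pos _).le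
      h1 hst hE2 hE3
  have hCI0 : 0 ≤ CI := by
    rw [hCIdef]
    positivity
  -- final assembly
  clear_value CI
  clear_value V0
  clear_value K2
  clear_value K
  clear_value gg
  clear_value ee
  clear_value CT
  clear_value u0
  clear_value q
  clear_value lam
  clear_value T
  clear_value a
  refine ⟨2 * CT + 2 * CI + 1, by linarith only [hCT0, hCI0], lam / 8,
    by linarith only [hlam0], fun t ht => ?_⟩
  have hTb := hTbound t ht
  have hIb := hIbound t ht
  simp only [heedef] at hIb
  have hE1 : Real.exp (-(a * t)) ≤ Real.exp (-(lam / 8) * t) := by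
    rw [Real.exp_le_exp]
    have q1 := mul_nonneg hlam0.le ht
    have q2 := mul_le_mul_of_nonneg_right hlam2 ht
    linarith only [q1, q2]
  have hSb : |S t - Sstar| ≤ CT * Real.exp (-(lam / 8) * t) := by
    have h1 : S t - Sstar = -(T t - Tstar) := by
      rw [hSt t ht, hTstar]; ring
    rw [h1, abs_neg]
    exact hTb.trans (mul_le_mul_of_nonneg_left hE1 hCT0)
  have hDb : |D t - Dstar| ≤ (CT + CI) * Real.exp (-(lam / 8) * t) := by
    have h1 : D t - Dstar = (T t - Tstar) - (I t - Istar) := by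
      simp only [hTdef]
      linarith only [hIDsum]
    rw [h1]
    refine (abs_sub _ _).trans ?_
    have h2 : |T t - Tstar| ≤ CT * Real.exp (-(lam / 8) * t) :=
      hTb.trans (mul_le_mul_of_nonneg_left hE1 hCT0)
    linarith only [h2, hIb]
  have hfin : |S t - Sstar| + |I t - Istar| + |D t - Dstar|
      ≤ (2 * CT + 2 * CI + 1) * Real.exp (-(lam / 8) * t) := by
    have hIe : |I t - Istar| ≤ CI * Real.exp (-(lam / 8) * t) := hIb
    linarith only [hSb, hIe, hDb, Real.exp_pos (-(lam / 8) * t)]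
  exact hfin
end

section
/- Consider the scalar ODE S'(t) = (1−S(t))(r + γ − βS(t)) with r > 0, γ ≥ 0, β ≥ 0. (i) If β ≤ r + γ and S(0) ∈ [0,1], then S(t) ∈ [0,1] for all t ≥ 0 and lim_{t→+∞} S(t) = 1. (ii) If β > r + γ and S(0) ∈ [0,1), then S(t) converges to S* = (r+γ)/β exponentially fast: there exist M > 0 and μ > 0 such that |S(t) − S*| ≤ M e^{−μt} for all t ≥ 0. -/
open Set Filter Real
open scoped Topology

/-- One-sided invariance: if `f 0 ≤ 0` and whenever `f t ≥ 0` (for `t ≥ 0`) the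
derivative satisfies `f' t ≤ K * f t + C * (f t)^2` with `C ≥ 0`, then `f t ≤ 0`
for all `t ≥ 0`. -/
lemma invariance_aux {f f' : ℝ → ℝ} (hd : ∀ t, 0 ≤ t → HasDerivAt f (f' t) t)
    (h0 : f 0 ≤ 0) (K C : ℝ) (hC : 0 ≤ C)
    (hb : ∀ t, 0 ≤ t → 0 ≤ f t → f' t ≤ K * f t + C * (f t) ^ 2) :
    ∀ t, 0 ≤ t → f t ≤ 0 := by
  intro t1 ht1
  by_contra hpos
  push_neg at hpos
  have hcont : ∀ t, 0 ≤ t → ContinuousAt f t := fun t ht => (hd t ht).continuousAt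
  have hcontOn : ContinuousOn f (Icc 0 t1) := fun x hx => (hcont x hx.1).continuousWithinAt
  set A : Set ℝ := {t | t ∈ Icc 0 t1 ∧ f t ≤ 0} with hA
  have hAne : A.Nonempty := ⟨0, ⟨le_refl 0, ht1⟩, h0⟩
  have hAbdd : BddAbove A := ⟨t1, fun x hx => hx.1.2⟩
  have hAclosed : IsClosed A := by
    have h := hcontOn.preimage_isClosed_of_isClosed isClosed_Icc (isClosed_Iic (a := (0:ℝ)))
    have : A = Icc 0 t1 ∩ f ⁻¹' Iic 0 := by ext x; simp [A, Set.mem_inter_iff]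
    rw [this]; exact h
  set s := sSup A with hs
  have hsA : s ∈ A := hAclosed.csSup_mem hAne hAbdd
  have hs0 : 0 ≤ s := hsA.1.1
  have hst1 : s ≤ t1 := hsA.1.2
  have hsne : s ≠ t1 := fun h => absurd hsA.2 (by rw [h]; exact not_le.2 hpos)
  have hslt : s < t1 := lt_of_le_of_ne hst1 hsne
  -- f is positive strictly after s up to t1
  have hfpos : ∀ t, s < t → t ≤ t1 → 0 < f t := by
    intro t hts htt1
    by_contra h
    push_neg at h
    exact absurd (le_csSup hAbdd (⟨⟨hs0.trans hts.le, htt1⟩, h⟩ : t ∈ A)) (not_le.2 hts)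
  -- f s = 0
  have hfs : f s = 0 := by
    refine le_antisymm hsA.2 ?_
    have htend : Tendsto f (𝓝[>] s) (𝓝 (f s)) :=
      ((hcont s hs0).continuousWithinAt).tendsto
    refine ge_of_tendsto htend ?_
    filter_upwards [Ioo_mem_nhdsGT_of_mem ⟨le_refl s, hslt⟩] with x hx
    exact (hfpos x hx.1 hx.2.le).le
  -- bound f on [s, t1]
  obtain ⟨B, hB⟩ : ∃ B, ∀ t ∈ Icc s t1, f t ≤ B := by
    obtain ⟨x, -, hx⟩ := isCompact_Icc.exists_isMaxOn (nonempty_Icc.2 hst1)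
      (hcontOn.mono (Icc_subset_Icc hs0 le_rfl))
    exact ⟨f x, fun t ht => hx ht⟩
  have hfnonneg : ∀ t ∈ Ico s t1, 0 ≤ f t := by
    intro t ht
    rcases eq_or_lt_of_le ht.1 with h | h
    · rw [← h, hfs]
    · exact (hfpos t h ht.2.le).le
  have key : ∀ x ∈ Icc s t1, f x ≤ gronwallBound 0 (K + C * B) 0 (x - s) := by
    refine le_gronwallBound_of_liminf_deriv_right_le (f' := f')
      (hcontOn.mono (Icc_subset_Icc hs0 le_rfl)) ?_ (by rw [hfs]) ?_
    · intro x hx r hr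
      exact ((hd x (hs0.trans hx.1)).hasDerivWithinAt (s := Ici x)).liminf_right_slope_le hr
    · intro x hx
      have hx0 : 0 ≤ x := hs0.trans hx.1
      have hfx : 0 ≤ f x := hfnonneg x hx
      have hfxB : f x ≤ B := hB x ⟨hx.1, hx.2.le⟩
      have := hb x hx0 hfx
      have h2 : C * f x ^ 2 ≤ C * B * f x := by
        have : f x ^ 2 ≤ B * f x := by nlinarith
        nlinarith
      calc f' x ≤ K * f x + C * f x ^ 2 := this
        _ ≤ K * f x + C * B * f x := by linarith
        _ = (K + C * B) * f x + 0 := by ring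
  have := key t1 ⟨hst1, le_rfl⟩
  rw [gronwallBound_ε0, zero_mul] at this
  exact absurd this (not_le.2 hpos)

/-- For the scalar ODE `S' = (1 − S)(r + γ − βS)` with `r > 0`, `γ ≥ 0`,
`β ≥ 0`:
(i) if `β ≤ r + γ` and `S(0) ∈ [0,1]`, then `S(t) ∈ [0,1]` for all `t ≥ 0` and
`S(t) → 1` as `t → +∞`;
(ii) if `β > r + γ` and `S(0) ∈ [0,1)`, then `S(t)` converges to `S* = (r+γ)/β`
exponentially fast. -/
theorem scalar_susceptible_ode_asymptotics
    (r γ β : ℝ) (hr : 0 < r) (hγ : 0 ≤ γ) (hβ : 0 ≤ β)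
    (S : ℝ → ℝ)
    (hS : ∀ t, 0 ≤ t → HasDerivAt S ((1 - S t) * (r + γ - β * S t)) t) :
    (β ≤ r + γ → S 0 ∈ Set.Icc (0:ℝ) 1 →
      (∀ t, 0 ≤ t → S t ∈ Set.Icc (0:ℝ) 1)
      ∧ Filter.Tendsto S Filter.atTop (nhds 1))
    ∧ (r + γ < β → S 0 ∈ Set.Ico (0:ℝ) 1 →
      ∃ M > (0:ℝ), ∃ μ > (0:ℝ), ∀ t, 0 ≤ t →
        |S t - (r + γ) / β| ≤ M * Real.exp (-μ * t)) := by
  have ha : 0 < r + γ := by linarith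
  constructor
  · -- Part (i)
    intro hbl hS0
    -- lower invariance : S t ≥ 0
    have hlow : ∀ t, 0 ≤ t → 0 ≤ S t := by
      have := invariance_aux (f := fun t => -S t)
        (f' := fun t => -((1 - S t) * (r + γ - β * S t)))
        (fun t ht => (hS t ht).neg) (by simpa using hS0.1) 0 0 le_rfl ?_
      · intro t ht; simpa using this t ht
      · intro t ht hft
        simp only [neg_nonneg] at hft
        nlinarith [mul_nonneg hβ (neg_nonneg.2 hft)]
    -- upper invariance : S t ≤ 1
    have hup : ∀ t, 0 ≤ t → S t ≤ 1 := by
      have := invariance_aux (f := fun t => S t - 1)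
        (f' := fun t => (1 - S t) * (r + γ - β * S t))
        (fun t ht => (hS t ht).sub_const 1) (by simpa using hS0.2) 0 β hβ ?_
      · intro t ht; simpa using this t ht
      · intro t ht hft
        simp only [sub_nonneg] at hft
        nlinarith [mul_nonneg hβ (sub_nonneg.2 hft)]
    have hmem : ∀ t, 0 ≤ t → S t ∈ Set.Icc (0:ℝ) 1 :=
      fun t ht => ⟨hlow t ht, hup t ht⟩
    refine ⟨hmem, ?_⟩
    -- monotone on [0, ∞)
    have hmono : MonotoneOn S (Ici 0) := by
      refine monotoneOn_of_deriv_nonneg (convex_Ici 0)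
        (fun t ht => (hS t ht).continuousAt.continuousWithinAt) ?_ ?_
      · intro t ht
        rw [interior_Ici] at ht
        exact ((hS t (le_of_lt ht)).differentiableAt).differentiableWithinAt
      · intro t ht
        rw [interior_Ici] at ht
        rw [(hS t ht.le).deriv]
        have h1 := hlow t ht.le
        have h2 := hup t ht.le
        nlinarith [mul_le_mul_of_nonneg_left h2 hβ]
    set L := sSup (S '' Ici 0) with hL
    have hne : (S '' Ici 0).Nonempty := ⟨S 0, 0, self_mem_Ici, rfl⟩
    have hbdd : BddAbove (S '' Ici 0) := by
      refine ⟨1, ?_⟩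
      rintro x ⟨t, ht, rfl⟩
      exact hup t ht
    have hSleL : ∀ t, 0 ≤ t → S t ≤ L := fun t ht => le_csSup hbdd ⟨t, ht, rfl⟩
    have hL1 : L ≤ 1 := csSup_le hne (by rintro x ⟨t, ht, rfl⟩; exact hup t ht)
    have hL0 : 0 ≤ L := le_trans hS0.1 (hSleL 0 le_rfl)
    -- L = 1
    have hLeq : L = 1 := by
      by_contra hne1
      have hLlt : L < 1 := lt_of_le_of_ne hL1 hne1
      set ρ := (r + γ) * (1 - L) ^ 2 with hρ
      have hρpos : 0 < ρ := mul_pos ha (pow_pos (by linarith) 2)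
      -- derivative of S is ≥ ρ on [0,∞)
      have hderiv_ge : ∀ t, 0 ≤ t → ρ ≤ (1 - S t) * (r + γ - β * S t) := by
        intro t ht
        have h1 : S t ≤ L := hSleL t ht
        have h2 : 0 ≤ S t := hlow t ht
        have h3 : β * S t ≤ (r + γ) * L := by
          calc β * S t ≤ β * L := by nlinarith
            _ ≤ (r + γ) * L := by nlinarith
        have h4 : (1:ℝ) - L ≤ 1 - S t := by linarith
        have h5 : (r + γ) * (1 - L) ≤ r + γ - β * S t := by nlinarith
        have h6 : (1 - L) * ((r + γ) * (1 - L)) ≤ (1 - S t) * (r + γ - β * S t) :=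
          mul_le_mul h4 h5 (by nlinarith) (by linarith)
        nlinarith [h6]
      -- so S t - ρ t is monotone, contradiction
      have hid : ∀ t : ℝ, HasDerivAt (fun x : ℝ => ρ * x) ρ t := by
        intro t
        simpa using (hasDerivAt_id t).const_mul ρ
      have hmono2 : MonotoneOn (fun t => S t - ρ * t) (Ici 0) := by
        refine monotoneOn_of_deriv_nonneg (convex_Ici 0) ?_ ?_ ?_
        · intro t ht
          exact (((hS t ht).sub (hid t)).continuousAt).continuousWithinAt
        · intro t ht
          rw [interior_Ici] at ht
          exact ((hS t ht.le).sub (hid t)).differentiableAt.differentiableWithinAt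
        · intro t ht
          rw [interior_Ici] at ht
          rw [HasDerivAt.deriv (f := fun t => S t - ρ * t) ((hS t ht.le).sub (hid t))]
          have := hderiv_ge t ht.le
          linarith
      have h2ρ : (0:ℝ) ≤ 2 / ρ := by positivity
      have := hmono2 self_mem_Ici (mem_Ici.2 h2ρ) h2ρ
      simp only [mul_zero, sub_zero] at this
      have hval : ρ * (2 / ρ) = 2 := by field_simp
      have hS2 : S (2 / ρ) ≤ 1 := hup _ h2ρ
      have hS0' : 0 ≤ S 0 := hS0.1
      nlinarith
    -- convergence
    rw [← hLeq]
    refine tendsto_order.2 ⟨?_, ?_⟩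
    · intro l hl
      obtain ⟨x, ⟨t0, ht0, rfl⟩, hx⟩ := exists_lt_of_lt_csSup hne hl
      filter_upwards [Filter.eventually_ge_atTop t0] with t ht
      exact lt_of_lt_of_le hx (hmono (mem_Ici.2 ht0) (mem_Ici.2 (le_trans ht0 ht)) ht)
    · intro u hu
      filter_upwards [Filter.eventually_ge_atTop (0:ℝ)] with t ht
      exact lt_of_le_of_lt (hSleL t ht) hu
  · -- Part (ii)
    intro hba hS0
    have hβpos : 0 < β := lt_trans ha hba
    set Sstar := (r + γ) / β with hSstar
    have hstar_pos : 0 < Sstar := div_pos ha hβpos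
    have hstar_lt1 : Sstar < 1 := (div_lt_one hβpos).2 hba
    have hβSstar : β * Sstar = r + γ := by
      rw [hSstar, mul_div_cancel₀ _ (ne_of_gt hβpos)]
    set c := max (S 0) Sstar with hc
    have hc1 : c < 1 := max_lt hS0.2 hstar_lt1
    have hcs : Sstar ≤ c := le_max_right _ _
    have hβc : r + γ ≤ β * c := by
      rw [← hβSstar]; exact mul_le_mul_of_nonneg_left hcs hβ
    -- invariance: S t ≤ c
    have hSc : ∀ t, 0 ≤ t → S t ≤ c := by
      have := invariance_aux (f := fun t => S t - c)
        (f' := fun t => (1 - S t) * (r + γ - β * S t))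
        (fun t ht => (hS t ht).sub_const c)
        (sub_nonpos.2 (le_max_left (S 0) Sstar))
        ((β * c - (r + γ)) - β * (1 - c)) β hβ ?_
      · intro t ht; exact sub_nonpos.1 (this t ht)
      · intro t ht hft
        replace hft : c ≤ S t := by simpa [sub_nonneg] using hft
        show (1 - S t) * (r + γ - β * S t)
            ≤ (β * c - (r + γ) - β * (1 - c)) * (S t - c) + β * (S t - c) ^ 2
        nlinarith [mul_nonneg (by linarith : (0:ℝ) ≤ 1 - c) (sub_nonneg.2 hβc)]
    set μ := β * (1 - c) with hμ
    have hμpos : 0 < μ := mul_pos hβpos (by linarith)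
    refine ⟨|S 0 - Sstar| + 1, by positivity, μ, hμpos, ?_⟩
    intro T hT
    -- Gronwall for F t = (S t - Sstar)^2
    have hF : ∀ x ∈ Set.Icc (0:ℝ) T,
        (S x - Sstar) ^ 2 ≤ gronwallBound ((S 0 - Sstar) ^ 2) (-(2 * μ)) 0 (x - 0) := by
      refine le_gronwallBound_of_liminf_deriv_right_le
        (f := fun t => (S t - Sstar) ^ 2)
        (f' := fun t => 2 * (S t - Sstar) * ((1 - S t) * (r + γ - β * S t)))
        (fun x hx => (((hS x hx.1).sub_const Sstar).pow 2).continuousAt.continuousWithinAt) ?_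
        le_rfl ?_
      · intro x hx rr hrr
        have hdx : HasDerivAt (fun t => (S t - Sstar) ^ 2)
            (2 * (S x - Sstar) * ((1 - S x) * (r + γ - β * S x))) x := by
          have := ((hS x hx.1).sub_const Sstar).pow 2
          simpa [pow_one, mul_comm, mul_assoc, mul_left_comm] using (show HasDerivAt (fun t => (S t - Sstar) ^ 2) _ x from this)
        exact (hdx.hasDerivWithinAt (s := Ici x)).liminf_right_slope_le hrr
      · intro x hx
        have hx0 : 0 ≤ x := hx.1
        have hxc : S x ≤ c := hSc x hx0
        have key : r + γ - β * S x = β * (Sstar - S x) := by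
          rw [mul_sub, hβSstar]
        have hsq : 0 ≤ (S x - Sstar) ^ 2 := sq_nonneg _
        have hfac : 0 ≤ β * (S x - Sstar) ^ 2 * (c - S x) :=
          mul_nonneg (mul_nonneg hβ hsq) (by linarith)
        have hEq : 2 * (S x - Sstar) * ((1 - S x) * (r + γ - β * S x))
            = -(2 * β) * (1 - S x) * (S x - Sstar) ^ 2 := by
          rw [key]; ring
        show 2 * (S x - Sstar) * ((1 - S x) * (r + γ - β * S x))
            ≤ -(2 * μ) * ((S x - Sstar) ^ 2) + 0
        rw [hEq]
        nlinarith [hfac]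
    have hFT := hF T ⟨hT, le_rfl⟩
    rw [gronwallBound_ε0, sub_zero] at hFT
    -- conclude
    have hexp : Real.exp (-(2 * μ) * T) = Real.exp (-μ * T) ^ 2 := by
      rw [sq, ← Real.exp_add]; ring_nf
    have habs : |S T - Sstar| ≤ |S 0 - Sstar| * Real.exp (-μ * T) := by
      have h2 : (S T - Sstar) ^ 2 ≤ (|S 0 - Sstar| * Real.exp (-μ * T)) ^ 2 := by
        rw [mul_pow, sq_abs, ← hexp]
        exact hFT
      have h3 : |S T - Sstar| ^ 2 ≤ (|S 0 - Sstar| * Real.exp (-μ * T)) ^ 2 := by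
        rwa [sq_abs]
      exact abs_le_of_sq_le_sq h2 (by positivity)
    calc |S T - Sstar| ≤ |S 0 - Sstar| * Real.exp (-μ * T) := habs
      _ ≤ (|S 0 - Sstar| + 1) * Real.exp (-μ * T) := by
          have := Real.exp_pos (-μ * T)
          nlinarith
end

section
/- One has 𝒫 := 2(T*)² − I*D* > 0, the row vector ω* = (φ*, ψ*) with φ* = (T* + I*)/𝒫 and ψ* = 2T*/𝒫 has strictly positive entries, and ω* is a left eigenvector of A* for the eigenvalue 0 normalized against X* = (I*, D*): ω* A* = (0, 0) and φ* I* + ψ* D* = 1. -/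
/-- One has `Pscr = 2(T*)² − I*D* > 0`; the row vector
`ω* = ((T*+I*)/Pscr, 2T*/Pscr)` has strictly positive entries, is a left eigenvector of `A*`
for the eigenvalue `0`, and is normalized against `X* = (I*, D*)`:
`ω* A* = (0,0)` and `φ* I* + ψ* D* = 1`. -/
theorem Astar_left_eigenvector
    (r γ k β : ℝ) (hr : 0 < r) (hγ : 0 ≤ γ) (hk : 0 < k) (hβ : r + γ < β)
    (Sstar Tstar Istar Dstar : ℝ)
    (hSstar : Sstar = (r + γ) / β)
    (hTstar : Tstar = 1 - Sstar)
    (hIstar : Istar = β * Tstar * Sstar / (r + γ + k * β * Tstar))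
    (hDstar : Dstar = k * β * Tstar * Istar / (r + γ))
    (Astar : Matrix (Fin 2) (Fin 2) ℝ)
    (hAstar : Astar = !![-(k * β * Tstar), β * Sstar;
                         (1/2) * k * β * (Tstar + Istar), (1/2) * k * β * Istar - (r + γ)])
    (Pscr φstar ψstar : ℝ)
    (hP : Pscr = 2 * Tstar ^ 2 - Istar * Dstar)
    (hφ : φstar = (Tstar + Istar) / Pscr)
    (hψ : ψstar = 2 * Tstar / Pscr) :
    0 < Pscr ∧ 0 < φstar ∧ 0 < ψstar
    ∧ Matrix.vecMul ![φstar, ψstar] Astar = ![0, 0]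
    ∧ φstar * Istar + ψstar * Dstar = 1 := by
  have hc : 0 < r + γ := by linarith
  have hβ0 : 0 < β := by linarith
  have hβS : β * Sstar = r + γ := by
    rw [hSstar]; field_simp
  have hT : 0 < Tstar := by
    rw [hTstar, hSstar]
    have : (r + γ) / β < 1 := (div_lt_one hβ0).mpr hβ
    linarith
  have hS : 0 < Sstar := by
    rw [hSstar]; positivity
  have hden : 0 < r + γ + k * β * Tstar := by positivity
  have hIeq : Istar * (r + γ + k * β * Tstar) = (r + γ) * Tstar := by
    rw [hIstar]
    field_simp
    nlinarith [hβS]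
  have hI : 0 < Istar := by
    rw [hIstar]; positivity
  have hD : 0 < Dstar := by
    rw [hDstar]; positivity
  have hDeq : Dstar * (r + γ) = k * β * Tstar * Istar := by
    rw [hDstar]; field_simp
  have hPpos : 0 < Pscr := by
    rw [hP]
    nlinarith [hIeq, hDeq, sq_nonneg (r + γ - k * β * Tstar), mul_pos hI hT,
      mul_pos (mul_pos hk hβ0) hT, mul_pos hI hI, sq_nonneg Istar]
  have hφpos : 0 < φstar := by rw [hφ]; positivity
  have hψpos : 0 < ψstar := by rw [hψ]; positivity
  refine ⟨hPpos, hφpos, hψpos, ?_, ?_⟩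
  · rw [hAstar]
    have hP0 : Pscr ≠ 0 := ne_of_gt hPpos
    funext i
    fin_cases i
    · simp only [Matrix.vecMul, dotProduct, Fin.sum_univ_two, Matrix.cons_val_zero,
        Matrix.cons_val_one, Matrix.head_cons, Matrix.cons_val', Matrix.head_fin_const,
        Matrix.empty_val', Matrix.cons_val_fin_one, Matrix.of_apply, Fin.zero_eta, Fin.mk_one]
      rw [hφ, hψ]
      field_simp
      ring
    · simp only [Matrix.vecMul, dotProduct, Fin.sum_univ_two, Matrix.cons_val_zero,
        Matrix.cons_val_one, Matrix.head_cons, Matrix.cons_val', Matrix.head_fin_const,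
        Matrix.empty_val', Matrix.cons_val_fin_one, Matrix.of_apply, Fin.zero_eta, Fin.mk_one]
      rw [hφ, hψ]
      field_simp
      linear_combination (Tstar + Istar) * hβS + hIeq
  · rw [hφ, hψ]
    have hP0 : Pscr ≠ 0 := ne_of_gt hPpos
    have key : (Tstar + Istar) * Istar + 2 * Tstar * Dstar = Pscr := by
      have key2 : (r + γ) * ((Tstar + Istar) * Istar + 2 * Tstar * Dstar)
          = (r + γ) * Pscr := by
        linear_combination (-(r+γ)) * hP + (2*Tstar+Istar) * hDeq + (2*Tstar+Istar) * hIeq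
      exact mul_left_cancel₀ (ne_of_gt hc) key2
    field_simp
    linear_combination key
end

section
/- The matrix A* satisfies det A* = 0 and trace A* = −(1/2)kβ(2T* − I*) − (r+γ) < 0; consequently the eigenvalues of A* are 0 and trace A*, so the nonzero eigenvalue of A* is strictly negative. -/
/-- `det A* = 0` and `trace A* = −(1/2)kβ(2T* − I*) − (r+γ) < 0`;
consequently the eigenvalues of `A*` are `0` and `trace A*`, so the nonzero eigenvalue
of `A*` is strictly negative. -/
theorem Astar_spectrum
    (r γ k β : ℝ) (hr : 0 < r) (hγ : 0 ≤ γ) (hk : 0 < k) (hβ : r + γ < β)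
    (Sstar Tstar Istar Dstar : ℝ)
    (hSstar : Sstar = (r + γ) / β)
    (hTstar : Tstar = 1 - Sstar)
    (hIstar : Istar = β * Tstar * Sstar / (r + γ + k * β * Tstar))
    (hDstar : Dstar = k * β * Tstar * Istar / (r + γ))
    (Astar : Matrix (Fin 2) (Fin 2) ℝ)
    (hAstar : Astar = !![-(k * β * Tstar), β * Sstar;
                         (1/2) * k * β * (Tstar + Istar), (1/2) * k * β * Istar - (r + γ)]) :
    Astar.det = 0
    ∧ Astar.trace = -((1/2) * k * β * (2 * Tstar - Istar)) - (r + γ)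
    ∧ Astar.trace < 0
    ∧ spectrum ℝ Astar = {0, Astar.trace} := by
  have hβ0 : (0:ℝ) < β := lt_of_le_of_lt (by linarith) hβ
  have hT : 0 < Tstar := by
    rw [hTstar, hSstar]; rw [sub_pos, div_lt_one hβ0]; exact hβ
  have hd : (0:ℝ) < r + γ + k * β * Tstar := by positivity
  have hd' : r + γ + k * β * Tstar ≠ 0 := ne_of_gt hd
  have hS : 0 < Sstar := by rw [hSstar]; positivity
  have hIT : Istar < Tstar := by
    rw [hIstar, hSstar, div_lt_iff₀ hd]
    have : β * Tstar * ((r+γ)/β) = Tstar * (r+γ) := by field_simp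
    rw [this]
    nlinarith [mul_pos (mul_pos hk hβ0) (mul_pos hT hT)]
  have hdet : Astar.det = 0 := by
    rw [hAstar, Matrix.det_fin_two_of, hIstar, hSstar]
    field_simp
    ring
  have htr : Astar.trace = -((1/2) * k * β * (2 * Tstar - Istar)) - (r + γ) := by
    rw [hAstar, Matrix.trace_fin_two_of]; ring
  have htrneg : Astar.trace < 0 := by
    rw [htr]
    nlinarith [mul_pos (mul_pos hk hβ0) hT]
  refine ⟨hdet, htr, htrneg, ?_⟩
  ext μ
  rw [spectrum.mem_iff, Matrix.isUnit_iff_isUnit_det, isUnit_iff_ne_zero, not_ne_iff]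
  have : (algebraMap ℝ (Matrix (Fin 2) (Fin 2) ℝ)) μ - Astar =
      !![μ + k * β * Tstar, -(β * Sstar);
         -((1/2) * k * β * (Tstar + Istar)), μ - ((1/2) * k * β * Istar - (r + γ))] := by
    rw [hAstar]
    ext i j
    fin_cases i <;> fin_cases j <;>
      simp [Matrix.algebraMap_eq_diagonal, Matrix.diagonal, Matrix.sub_apply] <;> ring
  rw [this, Matrix.det_fin_two_of]
  have hdet' : -(k * β * Tstar) * ((1/2) * k * β * Istar - (r + γ))
      - β * Sstar * ((1/2) * k * β * (Tstar + Istar)) = 0 := by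
    have := hdet
    rw [hAstar, Matrix.det_fin_two_of] at this
    linarith [this]
  constructor
  · intro h
    have hfac : (μ - 0) * (μ - Astar.trace) = 0 := by
      rw [hAstar, Matrix.trace_fin_two_of]
      linear_combination h - hdet'
    rw [Set.mem_insert_iff, Set.mem_singleton_iff]
    rcases mul_eq_zero.mp hfac with h1 | h2
    · left; linarith
    · right; linarith
  · intro h
    rw [Set.mem_insert_iff, Set.mem_singleton_iff] at h
    rcases h with h | h
    · subst h; linear_combination hdet'
    · subst h
      rw [hAstar, Matrix.trace_fin_two_of]
      linear_combination hdet'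
end

section
/- Let A be a real n×n matrix and E ⊆ ℝⁿ a linear subspace invariant under A such that ‖e^{tA} X‖ ≤ e^{−α₁ t}‖X‖ for all X ∈ E and t ≥ 0, for some α₁ > 0. Let G : ℝ → ℝⁿ be continuous with G(t) ∈ E and ‖G(t)‖ ≤ M₂ e^{−α₂ t} for all t ≥ 0, for some M₂ > 0 and α₂ > 0. If ξ : [0,∞) → ℝⁿ is differentiable with ξ'(t) = A ξ(t) + G(t) and ξ(0) ∈ E, then ξ(t) ∈ E for all t ≥ 0 and there exist M > 0 and α > 0 such that ‖ξ(t)‖ ≤ M e^{−αt} for all t ≥ 0. -/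
open NormedSpace

set_option maxHeartbeats 1000000
set_option synthInstance.maxHeartbeats 1000000

/-- Exponential decay for a linear inhomogeneous ODE `ξ' = Aξ + G` on an
`A`-invariant subspace `E` of `ℝⁿ` on which the semigroup `e^{tA}` decays exponentially,
with forcing term `G` valued in `E` and decaying exponentially. -/
theorem linear_ode_exponential_decay_on_invariant_subspace
    (n : ℕ) (A : Matrix (Fin n) (Fin n) ℝ)
    (E : Submodule ℝ (EuclideanSpace ℝ (Fin n)))
    (hinv : ∀ X ∈ E, Matrix.toEuclideanLin A X ∈ E)
    (α₁ : ℝ) (hα₁ : 0 < α₁)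
    (hdecay : ∀ t : ℝ, 0 ≤ t → ∀ X ∈ E,
      ‖Matrix.toEuclideanLin (NormedSpace.exp (t • A)) X‖ ≤ Real.exp (-α₁ * t) * ‖X‖)
    (G : ℝ → EuclideanSpace ℝ (Fin n)) (hGcont : Continuous G) (hGE : ∀ t, G t ∈ E)
    (M₂ α₂ : ℝ) (hM₂ : 0 < M₂) (hα₂ : 0 < α₂)
    (hG : ∀ t : ℝ, 0 ≤ t → ‖G t‖ ≤ M₂ * Real.exp (-α₂ * t))
    (ξ : ℝ → EuclideanSpace ℝ (Fin n))
    (hξ : ∀ t : ℝ, 0 ≤ t → HasDerivAt ξ (Matrix.toEuclideanLin A (ξ t) + G t) t)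
    (hξ0 : ξ 0 ∈ E) :
    (∀ t : ℝ, 0 ≤ t → ξ t ∈ E)
    ∧ ∃ M > (0:ℝ), ∃ α > (0:ℝ), ∀ t : ℝ, 0 ≤ t → ‖ξ t‖ ≤ M * Real.exp (-α * t) := by
  set 𝒜 : EuclideanSpace ℝ (Fin n) →L[ℝ] EuclideanSpace ℝ (Fin n) :=
    Matrix.toEuclideanCLM (𝕜 := ℝ) A with h𝒜
  letI : NormedAlgebra ℚ (EuclideanSpace ℝ (Fin n) →L[ℝ] EuclideanSpace ℝ (Fin n)) :=
    .restrictScalars ℚ ℝ _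
  set P : ℝ → (EuclideanSpace ℝ (Fin n) →L[ℝ] EuclideanSpace ℝ (Fin n)) :=
    fun t => exp (t • 𝒜) with hP
  -- exp commutes with toEuclideanCLM
  have hcast : ∀ t : ℝ, P t = Matrix.toEuclideanCLM (𝕜 := ℝ) (exp (t • A)) := by
    intro t
    letI : SeminormedRing (Matrix (Fin n) (Fin n) ℝ) := Matrix.linftyOpSemiNormedRing
    letI : NormedRing (Matrix (Fin n) (Fin n) ℝ) := Matrix.linftyOpNormedRing
    letI : NormedAlgebra ℝ (Matrix (Fin n) (Fin n) ℝ) := Matrix.linftyOpNormedAlgebra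
    letI : CompleteSpace (Matrix (Fin n) (Fin n) ℝ) := FiniteDimensional.complete ℝ _
    letI : NormedAlgebra ℚ (Matrix (Fin n) (Fin n) ℝ) := .restrictScalars ℚ ℝ _
    have hcont : Continuous (Matrix.toEuclideanCLM (𝕜 := ℝ) (n := Fin n)) := by
      let L : Matrix (Fin n) (Fin n) ℝ →ₗ[ℝ] (EuclideanSpace ℝ (Fin n) →L[ℝ] EuclideanSpace ℝ (Fin n)) :=
        { toFun := Matrix.toEuclideanCLM (𝕜 := ℝ),
          map_add' := fun x y => map_add _ x y,
          map_smul' := fun c x => map_smul _ c x }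
      exact L.continuous_of_finiteDimensional
    have h1 := map_exp (Matrix.toEuclideanCLM (𝕜 := ℝ) (n := Fin n)) hcont (t • A)
    rw [map_smul] at h1
    exact h1.symm
  -- decay transferred to P
  have hdecayP : ∀ t : ℝ, 0 ≤ t → ∀ X ∈ E, ‖P t X‖ ≤ Real.exp (-α₁ * t) * ‖X‖ := by
    intro t ht X hX
    rw [hcast t]
    exact hdecay t ht X hX
  -- invariance of E under 𝒜 and P t
  have h𝒜E : ∀ X ∈ E, 𝒜 X ∈ E := fun X hX => hinv X hX
  have hPE : ∀ t : ℝ, ∀ X ∈ E, P t X ∈ E := by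
    intro t X hX
    have hpow : ∀ k : ℕ, ((t • 𝒜) ^ k) X ∈ E := by
      intro k
      induction k with
      | zero => simpa using hX
      | succ k ih =>
        rw [pow_succ']
        have : ((t • 𝒜) * (t • 𝒜) ^ k) X = t • 𝒜 (((t • 𝒜) ^ k) X) := rfl
        rw [this]
        exact E.smul_mem _ (h𝒜E _ ih)
    have h0 := exp_series_hasSum_exp' (𝕂 := ℝ) (t • 𝒜)
    have hhs := (ContinuousLinearMap.apply ℝ (EuclideanSpace ℝ (Fin n)) X).hasSum h0
    have hcl : IsClosed (E : Set (EuclideanSpace ℝ (Fin n))) := E.closed_of_finiteDimensional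
    refine hcl.mem_of_tendsto hhs.tendsto_sum_nat ?_
    filter_upwards with m
    refine Submodule.sum_mem E fun k _ => ?_
    show ((k.factorial : ℝ)⁻¹) • (((t • 𝒜) ^ k) X) ∈ E
    exact E.smul_mem _ (hpow k)
  -- semigroup law
  have hPmul : ∀ a b : ℝ, P a * P b = P (a + b) := by
    intro a b
    have hc : Commute (a • 𝒜) (b • 𝒜) := by
      show _ = _
      ext x
      simp only [ContinuousLinearMap.mul_apply, ContinuousLinearMap.smul_apply, map_smul,
        smul_smul]
      rw [mul_comm]
    have h := add_smul a b 𝒜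
    calc P a * P b = exp (a • 𝒜 + b • 𝒜) := (exp_add_of_commute hc).symm
      _ = P (a + b) := by show _ = exp ((a + b) • 𝒜); rw [h]
  have hPapply : ∀ a b : ℝ, ∀ x : EuclideanSpace ℝ (Fin n), P a (P b x) = P (a + b) x := by
    intro a b x
    rw [← hPmul a b]; rfl
  have hP0 : ∀ x : EuclideanSpace ℝ (Fin n), P 0 x = x := by
    intro x
    have : P 0 = 1 := by
      show exp ((0:ℝ) • 𝒜) = 1
      rw [show (0:ℝ) • 𝒜 = 0 from zero_smul ℝ 𝒜, exp_zero]
    rw [this]; rfl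
  -- derivative of t ↦ P (-t)
  have hPneg : ∀ t : ℝ, HasDerivAt (fun u : ℝ => P (-u)) (-(𝒜 * P (-t))) t := by
    intro t
    have h1 : HasDerivAt (fun v : ℝ => exp (v • 𝒜)) (𝒜 * exp ((-t) • 𝒜)) (-t) :=
      hasDerivAt_exp_smul_const' 𝒜 (-t)
    have h2 : HasDerivAt (fun u : ℝ => -u) (-1 : ℝ) t := hasDerivAt_neg t
    have h3 := h1.scomp t h2
    simpa [hP, Function.comp_def] using h3
  -- derivative of η
  have hη : ∀ t : ℝ, 0 ≤ t → HasDerivAt (fun u => P (-u) (ξ u)) (P (-t) (G t)) t := by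
    intro t ht
    have h := (hPneg t).clm_apply (hξ t ht)
    have hc0 : Commute 𝒜 ((-t) • 𝒜) := by
      show _ = _
      ext x
      simp only [ContinuousLinearMap.mul_apply, ContinuousLinearMap.smul_apply, map_smul]
    have hc : 𝒜 * P (-t) = P (-t) * 𝒜 := hc0.exp_right.eq
    have hA : Matrix.toEuclideanLin A (ξ t) = 𝒜 (ξ t) := rfl
    have e1 : (-(𝒜 * P (-t))) (ξ t) + P (-t) (Matrix.toEuclideanLin A (ξ t) + G t)
        = P (-t) (G t) := by
      rw [hA, hc, ContinuousLinearMap.neg_apply, ContinuousLinearMap.mul_apply, map_add]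
      abel
    rwa [e1] at h
  have hcontP : Continuous P := by
    have : Continuous fun t : ℝ => t • 𝒜 := (continuous_id.smul continuous_const)
    exact exp_continuous.comp this
  -- the Duhamel formula
  have key : ∀ T : ℝ, 0 ≤ T →
      ξ T = P T (ξ 0) + ∫ s in (0:ℝ)..T, P (T - s) (G s) := by
    intro T hT
    have hint : IntervalIntegrable (fun s => P (-s) (G s)) MeasureTheory.volume 0 T :=
      (Continuous.clm_apply (hcontP.comp continuous_neg) hGcont).intervalIntegrable _ _
    have hftc : (∫ s in (0:ℝ)..T, P (-s) (G s)) = P (-T) (ξ T) - P (-0) (ξ 0) := by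
      refine intervalIntegral.integral_eq_sub_of_hasDerivAt (fun x hx => hη x ?_) hint
      rw [Set.uIcc_of_le hT] at hx
      exact hx.1
    have hstep : P (-T) (ξ T) = P (-0) (ξ 0) + ∫ s in (0:ℝ)..T, P (-s) (G s) := by
      rw [hftc]; abel
    have hξT : ξ T = P T (P (-T) (ξ T)) := by
      rw [hPapply, add_neg_cancel, hP0]
    rw [hξT, hstep, map_add]
    congr 1
    · rw [hPapply, neg_zero, add_zero]
    · rw [← ContinuousLinearMap.intervalIntegral_comp_comm (P T) hint]
      refine intervalIntegral.integral_congr fun s _ => ?_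
      rw [hPapply, ← sub_eq_add_neg]
  -- membership
  have hmem : ∀ T : ℝ, 0 ≤ T → ξ T ∈ E := by
    intro T hT
    rw [key T hT]
    refine E.add_mem (hPE T _ hξ0) ?_
    have hfE : ∀ s : ℝ, P (T - s) (G s) ∈ E := fun s => hPE _ _ (hGE s)
    have hfc : Continuous fun s => P (T - s) (G s) :=
      Continuous.clm_apply (hcontP.comp (continuous_const.sub continuous_id)) hGcont
    have hfint : IntervalIntegrable (fun s => P (T - s) (G s)) MeasureTheory.volume 0 T :=
      hfc.intervalIntegrable _ _
    set Q : EuclideanSpace ℝ (Fin n) →L[ℝ] EuclideanSpace ℝ (Fin n) := E.subtypeL.comp E.orthogonalProjectionOnto with hQdef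
    have hQfix : ∀ x ∈ E, Q x = x := fun x hx => Submodule.starProjection_eq_self_iff.mpr hx
    have hQmem : ∀ x : EuclideanSpace ℝ (Fin n), Q x ∈ E := fun x => (E.orthogonalProjectionOnto x).2
    have : Q (∫ s in (0:ℝ)..T, P (T - s) (G s)) = ∫ s in (0:ℝ)..T, P (T - s) (G s) := by
      rw [← ContinuousLinearMap.intervalIntegral_comp_comm Q hfint]
      exact intervalIntegral.integral_congr fun s _ => hQfix _ (hfE s)
    rw [← this]
    exact hQmem _
  refine ⟨hmem, ?_⟩
  set m := min α₁ α₂ with hm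
  have hm0 : 0 < m := lt_min hα₁ hα₂
  have hm1 : m ≤ α₁ := min_le_left _ _
  have hm2 : m ≤ α₂ := min_le_right _ _
  refine ⟨‖ξ 0‖ + 1 + 2 * M₂ / m, by positivity, m / 2, by positivity, ?_⟩
  intro T hT
  rw [key T hT]
  have hb1 : ‖P T (ξ 0)‖ ≤ Real.exp (-α₁ * T) * ‖ξ 0‖ := hdecayP T hT _ hξ0
  have hb2 : ‖∫ s in (0:ℝ)..T, P (T - s) (G s)‖ ≤ (M₂ * Real.exp (-m * T)) * |T - 0| := by
    apply intervalIntegral.norm_integral_le_of_norm_le_const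
    intro s hs
    rw [Set.uIoc_of_le hT] at hs
    have hs0 : 0 ≤ s := le_of_lt hs.1
    have hsT : s ≤ T := hs.2
    calc ‖P (T - s) (G s)‖
        ≤ Real.exp (-α₁ * (T - s)) * ‖G s‖ := hdecayP _ (by linarith) _ (hGE s)
      _ ≤ Real.exp (-α₁ * (T - s)) * (M₂ * Real.exp (-α₂ * s)) := by
          have := hG s hs0
          gcongr
      _ = M₂ * Real.exp (-α₁ * (T - s) + -α₂ * s) := by rw [Real.exp_add]; ring
      _ ≤ M₂ * Real.exp (-m * T) := by
          gcongr
          nlinarith [sub_nonneg.mpr hsT]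
  have habs : |T - 0| = T := by rw [sub_zero, abs_of_nonneg hT]
  rw [habs] at hb2
  have hexp1 : Real.exp (-α₁ * T) ≤ Real.exp (-(m / 2) * T) := by
    apply Real.exp_le_exp.mpr; nlinarith
  have hTe : T * Real.exp (-m * T) ≤ (2 / m) * Real.exp (-(m / 2) * T) := by
    have hx : (m / 2) * T ≤ Real.exp ((m / 2) * T) := by
      nlinarith [Real.add_one_le_exp ((m / 2) * T)]
    have e1 : Real.exp ((m / 2) * T) * Real.exp (-m * T) = Real.exp (-(m / 2) * T) := by
      rw [← Real.exp_add]; ring_nf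
    calc T * Real.exp (-m * T) = (2 / m) * ((m / 2) * T * Real.exp (-m * T)) := by
          field_simp
      _ ≤ (2 / m) * (Real.exp ((m / 2) * T) * Real.exp (-m * T)) := by
          have h2m : (0:ℝ) < 2 / m := by positivity
          have := mul_le_mul_of_nonneg_right hx (le_of_lt (Real.exp_pos (-m * T)))
          nlinarith
      _ = (2 / m) * Real.exp (-(m / 2) * T) := by rw [e1]
  calc ‖P T (ξ 0) + ∫ s in (0:ℝ)..T, P (T - s) (G s)‖
      ≤ ‖P T (ξ 0)‖ + ‖∫ s in (0:ℝ)..T, P (T - s) (G s)‖ := norm_add_le _ _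
    _ ≤ Real.exp (-α₁ * T) * ‖ξ 0‖ + M₂ * Real.exp (-m * T) * T := by
        refine add_le_add hb1 ?_; linarith [hb2]
    _ ≤ Real.exp (-(m / 2) * T) * ‖ξ 0‖ + M₂ * ((2 / m) * Real.exp (-(m / 2) * T)) := by
        refine add_le_add ?_ ?_
        · exact mul_le_mul_of_nonneg_right hexp1 (norm_nonneg _)
        · calc M₂ * Real.exp (-m * T) * T = M₂ * (T * Real.exp (-m * T)) := by ring
            _ ≤ M₂ * ((2 / m) * Real.exp (-(m / 2) * T)) := by gcongr
    _ ≤ (‖ξ 0‖ + 1 + 2 * M₂ / m) * Real.exp (-(m / 2) * T) := by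
        have he := Real.exp_pos (-(m / 2) * T)
        have hring : (‖ξ 0‖ + 1 + 2 * M₂ / m) * Real.exp (-(m / 2) * T)
            = Real.exp (-(m / 2) * T) * ‖ξ 0‖ + Real.exp (-(m / 2) * T)
              + M₂ * ((2 / m) * Real.exp (-(m / 2) * T)) := by
          ring
        rw [hring]
        linarith
end

section
/- Consider the spatial replicator system on P patches and N strains with a Metzler matrix M having zero row sums and d ≥ 0. If z : [0,∞) → (ℝ^N)^P is a solution with z_p(0) ∈ Σ_N for every p ∈ {1,…,P}, then z_p(τ) ∈ Σ_N for every p and every τ ≥ 0; that is, the product of simplices Σ_N × ⋯ × Σ_N (P factors) is positively invariant. -/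
open scoped BigOperators
open Set Filter
set_option maxHeartbeats 1000000

lemma hasDerivAt_min_sq (x : ℝ) :
    HasDerivAt (fun y : ℝ => (min y 0)^2) (2 * min x 0) x := by
  rcases lt_trichotomy x 0 with h | h | h
  · have he : (fun y : ℝ => y^2) =ᶠ[nhds x] (fun y : ℝ => (min y 0)^2) := by
      filter_upwards [Iio_mem_nhds h] with y hy
      rw [min_eq_left (le_of_lt hy)]
    have h2 : HasDerivAt (fun y : ℝ => y^2) (2*x) x := by
      simpa using hasDerivAt_pow 2 x
    have := h2.congr_of_eventuallyEq he.symm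
    rwa [min_eq_left h.le]
  · subst h
    rw [hasDerivAt_iff_isLittleO]
    have h2 : (fun y : ℝ => y^2) =o[nhds 0] fun y => y := by
      have h3 : HasDerivAt (fun y : ℝ => y^2) 0 0 := by simpa using hasDerivAt_pow 2 (0:ℝ)
      have := hasDerivAt_iff_isLittleO.mp h3
      simpa using this
    have h4 : (fun y : ℝ => (min y 0)^2) =O[nhds 0] fun y : ℝ => y^2 := by
      apply Asymptotics.IsBigO.of_bound 1
      filter_upwards with y
      have h5 : |min y 0| ≤ |y| := by
        rcases le_total y 0 with hy | hy
        · rw [min_eq_left hy]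
        · rw [min_eq_right hy]; simp
      have h6 : |min y 0| ^ 2 ≤ |y| ^ 2 := pow_le_pow_left₀ (abs_nonneg _) h5 2
      simp only [Real.norm_eq_abs, one_mul, abs_pow] at *
      exact h6
    have := h4.trans_isLittleO h2
    simpa using this
  · have he : (fun _ : ℝ => (0:ℝ)) =ᶠ[nhds x] (fun y : ℝ => (min y 0)^2) := by
      filter_upwards [Ioi_mem_nhds h] with y hy
      rw [min_eq_right (le_of_lt hy)]
      norm_num
    have := (hasDerivAt_const x (0:ℝ)).congr_of_eventuallyEq he.symm
    rwa [min_eq_right h.le, mul_zero]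

lemma min_zero_mul_self (x : ℝ) : min x 0 * x = (min x 0)^2 := by
  rcases le_total x 0 with h | h
  · rw [min_eq_left h]; ring
  · rw [min_eq_right h]; ring

lemma gron0 {f f' : ℝ → ℝ} {K b : ℝ}
    (hcont : ContinuousOn f (Icc 0 b))
    (hder : ∀ x ∈ Ico 0 b, HasDerivWithinAt f (f' x) (Ici x) x)
    (hbound : ∀ x ∈ Ico 0 b, f' x ≤ K * f x)
    (h0 : f 0 ≤ 0) : ∀ x ∈ Icc 0 b, f x ≤ 0 := by
  intro x hx
  have := le_gronwallBound_of_liminf_deriv_right_le (δ := 0) (ε := 0) hcont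
    (fun x hx r hr => by
      have := (hder x hx).liminf_right_slope_le hr
      simpa [slope_def_field, div_eq_inv_mul] using this)
    h0 (fun x hx => by simpa using hbound x hx) x hx
  simpa [gronwallBound_ε0_δ0] using this

/-- The product of simplices `Σ_N × ⋯ × Σ_N` (`P` factors) is positively
invariant for the spatial replicator system with a Metzler migration matrix `M` having
zero row sums and `d ≥ 0`. -/
theorem spatial_replicator_simplex_invariant
    (P N : ℕ) (hP : 1 ≤ P) (hN : 1 ≤ N)
    (Θ : Fin P → ℝ) (Λ : Fin P → Matrix (Fin N) (Fin N) ℝ)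
    (d : ℝ) (hd : 0 ≤ d)
    (M : Matrix (Fin P) (Fin P) ℝ)
    (hMetzler : ∀ p l, p ≠ l → 0 ≤ M p l)
    (hrow : ∀ p, ∑ l, M p l = 0)
    (z : ℝ → Fin P → Fin N → ℝ)
    (hz : ∀ τ : ℝ, 0 ≤ τ → ∀ p i, HasDerivAt (fun s => z s p i)
      (Θ p * z τ p i * ((∑ j, Λ p i j * z τ p j)
          - ∑ i', ∑ j, z τ p i' * Λ p i' j * z τ p j)
        + d * ∑ l, M p l * z τ l i) τ)
    (hinit : ∀ p, (∀ i, z 0 p i ∈ Set.Icc (0:ℝ) 1) ∧ ∑ i, z 0 p i = 1) :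
    ∀ τ : ℝ, 0 ≤ τ → ∀ p, (∀ i, z τ p i ∈ Set.Icc (0:ℝ) 1) ∧ ∑ i, z τ p i = 1 := by
  classical
  intro b hb
  have hzc : ∀ p i, ContinuousOn (fun s => z s p i) (Icc 0 b) := fun p i τ hτ =>
    ((hz τ hτ.1 p i).continuousAt).continuousWithinAt
  set Q : ℝ → Fin P → ℝ := fun τ p => ∑ i', ∑ j, z τ p i' * Λ p i' j * z τ p j with hQdef
  set S : ℝ → Fin P → ℝ := fun τ p => ∑ i, z τ p i with hSdef
  set L : ℝ → Fin P → Fin N → ℝ := fun τ p i => ∑ j, Λ p i j * z τ p j with hLdef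
  set A : ℝ → Fin P → Fin N → ℝ := fun τ p i => Θ p * (L τ p i - Q τ p) with hAdef
  set D : ℝ → Fin P → Fin N → ℝ :=
    fun τ p i => Θ p * z τ p i * (L τ p i - Q τ p) + d * ∑ l, M p l * z τ l i with hDdef
  have hzD : ∀ τ, 0 ≤ τ → ∀ p i, HasDerivAt (fun s => z s p i) (D τ p i) τ := hz
  -- continuity facts
  have hQc : ∀ p, ContinuousOn (fun τ => Q τ p) (Icc 0 b) := by
    intro p
    apply continuousOn_finset_sum; intro i _
    apply continuousOn_finset_sum; intro j _
    exact ((hzc p i).mul continuousOn_const).mul (hzc p j)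
  have hLc : ∀ p i, ContinuousOn (fun τ => L τ p i) (Icc 0 b) := by
    intro p i
    apply continuousOn_finset_sum; intro j _
    exact continuousOn_const.mul (hzc p j)
  -- bound on |Θ p * Q τ p|
  obtain ⟨CS, hCS0, hCS⟩ : ∃ C, 0 ≤ C ∧ ∀ τ ∈ Icc (0:ℝ) b, ∀ p, |Θ p * Q τ p| ≤ C := by
    obtain ⟨C, hC⟩ := (isCompact_Icc (a := (0:ℝ)) (b := b)).exists_bound_of_continuousOn
      (f := fun τ => (fun p => Θ p * Q τ p : Fin P → ℝ))
      (continuousOn_pi.mpr (fun p => continuousOn_const.mul (hQc p)))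
    refine ⟨max C 0, le_max_right _ _, fun τ hτ p => ?_⟩
    have h1 : |Θ p * Q τ p| ≤ ‖(fun p => Θ p * Q τ p : Fin P → ℝ)‖ := by
      have := norm_le_pi_norm (fun p => Θ p * Q τ p) p
      rwa [Real.norm_eq_abs] at this
    exact h1.trans ((hC τ hτ).trans (le_max_left _ _))
  -- bound on |A τ p i|
  obtain ⟨CA, hCA0, hCA⟩ : ∃ C, 0 ≤ C ∧ ∀ τ ∈ Icc (0:ℝ) b, ∀ p i, |A τ p i| ≤ C := by
    obtain ⟨C, hC⟩ := (isCompact_Icc (a := (0:ℝ)) (b := b)).exists_bound_of_continuousOn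
      (f := fun τ => (fun pi : Fin P × Fin N => A τ pi.1 pi.2))
      (continuousOn_pi.mpr (fun pi =>
        continuousOn_const.mul ((hLc pi.1 pi.2).sub (hQc pi.1))))
    refine ⟨max C 0, le_max_right _ _, fun τ hτ p i => ?_⟩
    have h1 : |A τ p i| ≤ ‖(fun pi : Fin P × Fin N => A τ pi.1 pi.2)‖ := by
      have := norm_le_pi_norm (fun pi : Fin P × Fin N => A τ pi.1 pi.2) (p, i)
      rwa [Real.norm_eq_abs] at this
    exact h1.trans ((hC τ hτ).trans (le_max_left _ _))
  set MB : ℝ := ∑ p, ∑ l, |M p l| with hMBdef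
  have hMB : ∀ p, ∑ l, |M p l| ≤ MB := fun p =>
    Finset.single_le_sum (f := fun q => ∑ l, |M q l|)
      (fun q _ => Finset.sum_nonneg fun l _ => abs_nonneg _) (Finset.mem_univ p)
  have hMB0 : 0 ≤ MB := Finset.sum_nonneg fun q _ =>
    Finset.sum_nonneg fun l _ => abs_nonneg _
  ----------------------------------------------------------------
  -- Part 1 : the sums S stay equal to 1
  ----------------------------------------------------------------
  have hS' : ∀ τ, 0 ≤ τ → ∀ p, HasDerivAt (fun s => S s p)
      (Θ p * Q τ p * (1 - S τ p) + d * ∑ l, M p l * (S τ l - 1)) τ := by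
    intro τ hτ p
    have h1 : HasDerivAt (fun s => S s p) (∑ i, D τ p i) τ :=
      HasDerivAt.fun_sum (fun i _ => hzD τ hτ p i)
    have k1 : ∑ i, z τ p i * L τ p i = Q τ p := by
      rw [hQdef, hLdef]
      exact Finset.sum_congr rfl fun i _ => by
        rw [Finset.mul_sum]; exact Finset.sum_congr rfl fun j _ => by ring
    have k2 : ∑ l, M p l * (S τ l - 1) = ∑ l, M p l * S τ l := by
      have e : ∑ l, M p l * (S τ l - 1) = ∑ l, (M p l * S τ l - M p l) :=
        Finset.sum_congr rfl fun l _ => by ring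
      rw [e, Finset.sum_sub_distrib, hrow p, sub_zero]
    have k3 : ∑ i, D τ p i
        = Θ p * Q τ p - Θ p * Q τ p * S τ p + d * ∑ l, M p l * S τ l := by
      rw [hDdef]
      simp only
      rw [Finset.sum_add_distrib]
      congr 1
      · have e : ∀ i ∈ Finset.univ, Θ p * z τ p i * (L τ p i - Q τ p)
            = Θ p * (z τ p i * L τ p i) - (Θ p * Q τ p) * z τ p i := fun i _ => by ring
        rw [Finset.sum_congr rfl e, Finset.sum_sub_distrib, ← Finset.mul_sum,
          ← Finset.mul_sum, k1]
      · rw [← Finset.mul_sum, Finset.sum_comm]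
        congr 1
        exact Finset.sum_congr rfl fun l _ => (Finset.mul_sum _ _ _).symm
    rw [k3, ← k2] at h1
    convert h1 using 1
    ring
  set g : ℝ → ℝ := fun τ => ∑ p, (S τ p - 1)^2 with hgdef
  set g' : ℝ → ℝ := fun τ => ∑ p, 2 * (S τ p - 1) *
      (Θ p * Q τ p * (1 - S τ p) + d * ∑ l, M p l * (S τ l - 1)) with hg'def
  have hgD : ∀ τ, 0 ≤ τ → HasDerivAt g (g' τ) τ := by
    intro τ hτ
    apply HasDerivAt.fun_sum
    intro p _
    have h1 := ((hS' τ hτ p).sub_const 1).fun_pow 2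
    convert h1 using 1
    · rfl
    push_cast
    ring
  have hgnn : ∀ τ, 0 ≤ g τ := fun τ => Finset.sum_nonneg fun p _ => sq_nonneg _
  have hgbound : ∀ τ ∈ Ico (0:ℝ) b, g' τ ≤ ((P : ℝ) * (2*CS + 2*d*MB)) * g τ := by
    intro τ hτ
    have hτ' : τ ∈ Icc (0:ℝ) b := ⟨hτ.1, hτ.2.le⟩
    have hterm : ∀ p, 2 * (S τ p - 1) *
        (Θ p * Q τ p * (1 - S τ p) + d * ∑ l, M p l * (S τ l - 1))
        ≤ (2*CS + 2*d*MB) * g τ := by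
      intro p
      have hup2 : (S τ p - 1)^2 ≤ g τ :=
        Finset.single_le_sum (f := fun q => (S τ q - 1)^2)
          (fun q _ => sq_nonneg _) (Finset.mem_univ p)
      have hg0 := hgnn τ
      have hA := hCS τ hτ' p
      have e1 : 2 * (S τ p - 1) *
          (Θ p * Q τ p * (1 - S τ p) + d * ∑ l, M p l * (S τ l - 1))
          = 2 * (S τ p - 1) * (Θ p * Q τ p * (1 - S τ p))
            + ∑ l, 2 * d * (M p l * ((S τ p - 1) * (S τ l - 1))) := by
        have e2 : (2 * (S τ p - 1)) * (d * ∑ l, M p l * (S τ l - 1))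
            = ∑ l, 2 * d * (M p l * ((S τ p - 1) * (S τ l - 1))) := by
          rw [Finset.mul_sum, Finset.mul_sum]
          exact Finset.sum_congr rfl fun l _ => by ring
        rw [mul_add, e2]
      rw [e1]
      have hb1 : 2 * (S τ p - 1) * (Θ p * Q τ p * (1 - S τ p)) ≤ 2 * CS * g τ := by
        nlinarith [abs_le.mp hA, hup2, sq_nonneg (S τ p - 1),
          mul_nonneg (by linarith [(abs_le.mp hA).1] : (0:ℝ) ≤ CS + Θ p * Q τ p)
            (sq_nonneg (S τ p - 1)),
          mul_le_mul_of_nonneg_left hup2 (by linarith : (0:ℝ) ≤ 2*CS)]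
      have hb2 : ∀ l, 2 * d * (M p l * ((S τ p - 1) * (S τ l - 1)))
          ≤ 2 * d * (|M p l| * g τ) := by
        intro l
        have hul2 : (S τ l - 1)^2 ≤ g τ :=
          Finset.single_le_sum (f := fun q => (S τ q - 1)^2)
            (fun q _ => sq_nonneg _) (Finset.mem_univ l)
        have h1 : (S τ p - 1) * (S τ l - 1) ≤ g τ := by
          nlinarith [sq_nonneg (S τ p - 1 - (S τ l - 1))]
        have h1' : -(g τ) ≤ (S τ p - 1) * (S τ l - 1) := by
          nlinarith [sq_nonneg (S τ p - 1 + (S τ l - 1))]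
        have h2 : M p l * ((S τ p - 1) * (S τ l - 1)) ≤ |M p l| * g τ := by
          rcases le_total 0 (M p l) with hM | hM
          · rw [abs_of_nonneg hM]; exact mul_le_mul_of_nonneg_left h1 hM
          · rw [abs_of_nonpos hM]
            nlinarith [mul_nonneg (neg_nonneg.mpr hM)
              (by linarith : (0:ℝ) ≤ (S τ p - 1) * (S τ l - 1) + g τ)]
        exact mul_le_mul_of_nonneg_left h2 (by linarith : (0:ℝ) ≤ 2*d)
      have hsum : ∑ l, 2 * d * (M p l * ((S τ p - 1) * (S τ l - 1)))
          ≤ 2 * d * MB * g τ := by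
        calc ∑ l, 2 * d * (M p l * ((S τ p - 1) * (S τ l - 1)))
            ≤ ∑ l, 2 * d * (|M p l| * g τ) := Finset.sum_le_sum fun l _ => hb2 l
          _ = (∑ l, |M p l|) * (2 * d * g τ) := by
              rw [Finset.sum_mul]
              exact Finset.sum_congr rfl fun l _ => by ring
          _ ≤ MB * (2 * d * g τ) :=
              mul_le_mul_of_nonneg_right (hMB p)
                (mul_nonneg (by linarith : (0:ℝ) ≤ 2*d) hg0)
          _ = 2 * d * MB * g τ := by ring
      calc 2 * (S τ p - 1) * (Θ p * Q τ p * (1 - S τ p))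
            + ∑ l, 2 * d * (M p l * ((S τ p - 1) * (S τ l - 1)))
          ≤ 2 * CS * g τ + 2 * d * MB * g τ := add_le_add hb1 hsum
        _ = (2*CS + 2*d*MB) * g τ := by ring
    calc g' τ = ∑ p, 2 * (S τ p - 1) *
          (Θ p * Q τ p * (1 - S τ p) + d * ∑ l, M p l * (S τ l - 1)) := rfl
      _ ≤ ∑ _p : Fin P, (2*CS + 2*d*MB) * g τ := Finset.sum_le_sum fun p _ => hterm p
      _ = ((P : ℝ) * (2*CS + 2*d*MB)) * g τ := by
          rw [Finset.sum_const, Finset.card_univ, Fintype.card_fin, nsmul_eq_mul]; ring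
  have hgcont : ContinuousOn g (Icc 0 b) := fun τ hτ =>
    ((hgD τ hτ.1).continuousAt).continuousWithinAt
  have hg0 : g 0 ≤ 0 := by
    have he : g 0 = 0 := by
      show ∑ p, (S 0 p - 1)^2 = 0
      apply Finset.sum_eq_zero
      intro p _
      have hS1 : S 0 p = 1 := (hinit p).2
      rw [hS1]; ring
    linarith
  have hgz : ∀ τ ∈ Icc (0:ℝ) b, g τ ≤ 0 :=
    gron0 hgcont (fun x hx => (hgD x hx.1).hasDerivWithinAt) hgbound hg0
  have hSb : ∀ p, S b p = 1 := by
    intro p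
    have h1 : g b = 0 := le_antisymm (hgz b ⟨hb, le_refl b⟩) (hgnn b)
    have h2 := (Finset.sum_eq_zero_iff_of_nonneg
      (fun p (_ : p ∈ Finset.univ) => sq_nonneg (S b p - 1))).mp h1 p (Finset.mem_univ p)
    have := pow_eq_zero_iff (n := 2) (by norm_num) |>.mp h2
    linarith [this]
  ----------------------------------------------------------------
  -- Part 2 : nonnegativity
  ----------------------------------------------------------------
  set f : ℝ → ℝ := fun τ => ∑ p, ∑ i, (min (z τ p i) 0)^2 with hfdef
  set f' : ℝ → ℝ := fun τ => ∑ p, ∑ i, 2 * min (z τ p i) 0 * D τ p i with hf'def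
  have hfD : ∀ τ, 0 ≤ τ → HasDerivAt f (f' τ) τ := by
    intro τ hτ
    apply HasDerivAt.fun_sum
    intro p _
    apply HasDerivAt.fun_sum
    intro i _
    exact (hasDerivAt_min_sq (z τ p i)).comp τ (hzD τ hτ p i)
  have hfnn : ∀ τ, 0 ≤ f τ := fun τ =>
    Finset.sum_nonneg fun p _ => Finset.sum_nonneg fun i _ => sq_nonneg _
  have hm2 : ∀ τ p i, (min (z τ p i) 0)^2 ≤ f τ := by
    intro τ p i
    calc (min (z τ p i) 0)^2
        ≤ ∑ i, (min (z τ p i) 0)^2 :=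
          Finset.single_le_sum (f := fun i => (min (z τ p i) 0)^2)
            (fun j _ => sq_nonneg _) (Finset.mem_univ i)
      _ ≤ f τ := Finset.single_le_sum (f := fun q => ∑ i, (min (z τ q i) 0)^2)
            (fun q _ => Finset.sum_nonneg fun j _ => sq_nonneg _) (Finset.mem_univ p)
  have hfbound : ∀ τ ∈ Ico (0:ℝ) b,
      f' τ ≤ (((P : ℝ) * (N : ℝ)) * (2*CA + 2*d*MB)) * f τ := by
    intro τ hτ
    have hτ' : τ ∈ Icc (0:ℝ) b := ⟨hτ.1, hτ.2.le⟩
    have hf0 := hfnn τ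
    have hterm : ∀ p i, 2 * min (z τ p i) 0 * D τ p i ≤ (2*CA + 2*d*MB) * f τ := by
      intro p i
      have hm := hm2 τ p i
      have hA := hCA τ hτ' p i
      have e1 : 2 * min (z τ p i) 0 * D τ p i
          = 2 * A τ p i * (min (z τ p i) 0 * z τ p i)
            + ∑ l, 2 * d * (M p l * (min (z τ p i) 0 * z τ l i)) := by
        rw [hDdef, hAdef]
        simp only
        have e2 : 2 * min (z τ p i) 0 * (d * ∑ l, M p l * z τ l i)
            = ∑ l, 2 * d * (M p l * (min (z τ p i) 0 * z τ l i)) := by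
          rw [Finset.mul_sum, Finset.mul_sum]
          exact Finset.sum_congr rfl fun l _ => by ring
        rw [mul_add, e2]
        congr 1
        ring
      rw [e1, min_zero_mul_self]
      have hb1 : 2 * A τ p i * (min (z τ p i) 0)^2 ≤ 2 * CA * f τ := by
        nlinarith [abs_le.mp hA, hm, sq_nonneg (min (z τ p i) 0),
          mul_nonneg (by linarith [(abs_le.mp hA).1] : (0:ℝ) ≤ CA + A τ p i)
            (sq_nonneg (min (z τ p i) 0)),
          mul_le_mul_of_nonneg_left hm (by linarith : (0:ℝ) ≤ 2*CA)]
      have hb2 : ∀ l, 2 * d * (M p l * (min (z τ p i) 0 * z τ l i))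
          ≤ 2 * d * (|M p l| * f τ) := by
        intro l
        have hml := hm2 τ l i
        have hkey : M p l * (min (z τ p i) 0 * z τ l i) ≤ |M p l| * f τ := by
          rcases eq_or_ne p l with rfl | hpl
          · rw [min_zero_mul_self]
            rcases le_total 0 (M p p) with hM | hM
            · rw [abs_of_nonneg hM]; exact mul_le_mul_of_nonneg_left hm hM
            · rw [abs_of_nonpos hM]
              nlinarith [sq_nonneg (min (z τ p i) 0)]
          · have hM := hMetzler p l hpl
            rw [abs_of_nonneg hM]
            have h1 : min (z τ p i) 0 * z τ l i ≤ min (z τ p i) 0 * min (z τ l i) 0 :=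
              mul_le_mul_of_nonpos_left (min_le_left _ _) (min_le_right _ _)
            have h2 : min (z τ p i) 0 * min (z τ l i) 0 ≤ f τ := by
              nlinarith [sq_nonneg (min (z τ p i) 0 - min (z τ l i) 0), hm, hml]
            exact mul_le_mul_of_nonneg_left (h1.trans h2) hM
        exact mul_le_mul_of_nonneg_left hkey (by linarith : (0:ℝ) ≤ 2*d)
      have hsum : ∑ l, 2 * d * (M p l * (min (z τ p i) 0 * z τ l i))
          ≤ 2 * d * MB * f τ := by
        calc ∑ l, 2 * d * (M p l * (min (z τ p i) 0 * z τ l i))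
            ≤ ∑ l, 2 * d * (|M p l| * f τ) := Finset.sum_le_sum fun l _ => hb2 l
          _ = (∑ l, |M p l|) * (2 * d * f τ) := by
              rw [Finset.sum_mul]
              exact Finset.sum_congr rfl fun l _ => by ring
          _ ≤ MB * (2 * d * f τ) :=
              mul_le_mul_of_nonneg_right (hMB p)
                (mul_nonneg (by linarith : (0:ℝ) ≤ 2*d) hf0)
          _ = 2 * d * MB * f τ := by ring
      calc 2 * A τ p i * (min (z τ p i) 0)^2
            + ∑ l, 2 * d * (M p l * (min (z τ p i) 0 * z τ l i))
          ≤ 2 * CA * f τ + 2 * d * MB * f τ := add_le_add hb1 hsum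
        _ = (2*CA + 2*d*MB) * f τ := by ring
    calc f' τ = ∑ p, ∑ i, 2 * min (z τ p i) 0 * D τ p i := rfl
      _ ≤ ∑ _p : Fin P, ∑ _i : Fin N, (2*CA + 2*d*MB) * f τ :=
          Finset.sum_le_sum fun p _ => Finset.sum_le_sum fun i _ => hterm p i
      _ = (((P : ℝ) * (N : ℝ)) * (2*CA + 2*d*MB)) * f τ := by
          rw [Finset.sum_const, Finset.sum_const, Finset.card_univ, Finset.card_univ,
            Fintype.card_fin, Fintype.card_fin, smul_smul, nsmul_eq_mul]
          push_cast
          ring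
  have hfcont : ContinuousOn f (Icc 0 b) := fun τ hτ =>
    ((hfD τ hτ.1).continuousAt).continuousWithinAt
  have hf0 : f 0 ≤ 0 := by
    have he : f 0 = 0 := by
      show ∑ p, ∑ i, (min (z 0 p i) 0)^2 = 0
      apply Finset.sum_eq_zero
      intro p _
      apply Finset.sum_eq_zero
      intro i _
      rw [min_eq_right ((hinit p).1 i).1]
      ring
    linarith
  have hfz : ∀ τ ∈ Icc (0:ℝ) b, f τ ≤ 0 :=
    gron0 hfcont (fun x hx => (hfD x hx.1).hasDerivWithinAt) hfbound hf0
  have hznn : ∀ p i, 0 ≤ z b p i := by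
    intro p i
    have h1 : f b = 0 := le_antisymm (hfz b ⟨hb, le_refl b⟩) (hfnn b)
    have h2 := (Finset.sum_eq_zero_iff_of_nonneg
      (fun p (_ : p ∈ Finset.univ) => Finset.sum_nonneg
        (fun i (_ : i ∈ Finset.univ) => sq_nonneg (min (z b p i) 0)))).mp h1 p
        (Finset.mem_univ p)
    have h3 := (Finset.sum_eq_zero_iff_of_nonneg
      (fun i (_ : i ∈ Finset.univ) => sq_nonneg (min (z b p i) 0))).mp h2 i
        (Finset.mem_univ i)
    have h4 := pow_eq_zero_iff (n := 2) (by norm_num) |>.mp h3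
    by_contra h
    push_neg at h
    rw [min_eq_left h.le] at h4
    exact absurd h4 (ne_of_lt h)
  ----------------------------------------------------------------
  intro p
  refine ⟨fun i => ⟨hznn p i, ?_⟩, hSb p⟩
  have h1 : z b p i ≤ ∑ i, z b p i :=
    Finset.single_le_sum (f := fun i => z b p i) (fun j _ => hznn p j) (Finset.mem_univ i)
  have h2 : ∑ i, z b p i = 1 := hSb p
  linarith
end
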